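/- arXiv:1207.4650 — 3 statements merged into one kernel-verified Lean document; each statement's English description precedes it below -/
import Mathlib

section
/- For every positive rational number q there exists a finitely presented group G such that RG(G) = q. In fact, if q = m/n with m, n positive integers, the group G = F_{m+1} × A, where F_{m+1} is a free group of rank m+1 and A is any group of order n, satisfies RG(G) = m/n. -/
/-- `dGen G` is the minimal number of generators of the group `G`. -/
noncomputable def dGen (G : Type*) [Group G] : ℕ :=
  sInf {n : ℕ | ∃ S : Finset G, S.card = n ∧ Subgroup.closure (S : Set G) = ⊤}

/-- The rank gradient of `G`. -/
noncomputable def rankGradient (G : Type*) [Group G] : ℝ :=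
  sInf {r : ℝ | ∃ H : Subgroup G, H.index ≠ 0 ∧ r = ((dGen H : ℝ) - 1) / (H.index : ℝ)}

open scoped commutatorElement

/-- The subgroup `[G,G]G^p` of `G` (as a normal closure of its generators). -/
def pCommPow (p : ℕ) (G : Type*) [Group G] : Subgroup G :=
  Subgroup.normalClosure ({x | ∃ a b : G, x = ⁅a, b⁆} ∪ {x | ∃ g : G, x = g ^ p})

instance pCommPow_normal (p : ℕ) (G : Type*) [Group G] : (pCommPow p G).Normal :=
  Subgroup.normalClosure_normal

/-- `d_p(G) = d(G/([G,G]G^p))`. -/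
noncomputable def dp (p : ℕ) (G : Type*) [Group G] : ℕ :=
  dGen (G ⧸ pCommPow p G)

/-- The `p`-gradient of `G`. -/
noncomputable def pGradient (p : ℕ) (G : Type*) [Group G] : ℝ :=
  sInf {r : ℝ | ∃ H : Subgroup G, H.Normal ∧ (∃ k : ℕ, H.index = p ^ k) ∧
    r = ((dp p H : ℝ) - 1) / (H.index : ℝ)}

/-- The `p`-residual: intersection of all normal subgroups of `p`-power index. -/
def pResidual (p : ℕ) (G : Type*) [Group G] : Subgroup G :=
  ⨅ H ∈ {H : Subgroup G | H.Normal ∧ ∃ k : ℕ, H.index = p ^ k}, H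

instance pResidual_normal (p : ℕ) (G : Type*) [Group G] : (pResidual p G).Normal := by
  constructor
  intro n hn g
  simp only [pResidual, Subgroup.mem_iInf] at hn ⊢
  intro H hH
  exact hH.1.conj_mem n (hn H hH) g


/-- A group is finitely presented if it is the quotient of a finite-rank free group
by the normal closure of finitely many relators. -/
def IsFinitelyPresentedGroup (G : Type*) [Group G] : Prop :=
  ∃ (n : ℕ) (f : FreeGroup (Fin n) →* G) (S : Finset (FreeGroup (Fin n))),
    Function.Surjective f ∧ f.ker = Subgroup.normalClosure (S : Set (FreeGroup (Fin n)))


namespace RGaux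

abbrev FG (m : ℕ) := FreeGroup (Fin (m + 1))
abbrev Mp (m : ℕ) := (FG m × Fin (m + 1)) →₀ ZMod 2

variable {m : ℕ}

/-- Left translation of edge-chains at the free-group level. -/
noncomputable def shift (g : FG m) : Mp m →+ Mp m :=
  Finsupp.mapDomain.addMonoidHom (fun pj => (g * pj.1, pj.2))

lemma shift_shift (g h : FG m) (a : Mp m) : shift g (shift h a) = shift (g * h) a := by
  simp only [shift, Finsupp.mapDomain.addMonoidHom_apply]
  rw [← Finsupp.mapDomain_comp]
  congr 1
  funext pj
  simp [Function.comp, mul_assoc]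

lemma shift_one (a : Mp m) : shift (1 : FG m) a = a := by
  simp only [shift, Finsupp.mapDomain.addMonoidHom_apply]
  rw [show (fun pj : FG m × Fin (m+1) => ((1 : FG m) * pj.1, pj.2)) = id by funext pj; simp]
  exact Finsupp.mapDomain_id

lemma shift_single (g p : FG m) (j : Fin (m + 1)) (v : ZMod 2) :
    shift g (Finsupp.single (p, j) v) = Finsupp.single (g * p, j) v := by
  simp [shift, Finsupp.mapDomain_single]

/-- The auxiliary group `Mp ⋊ FG`. -/
structure W (m : ℕ) where
  a : Mp m
  g : FG m

noncomputable instance : One (W m) := ⟨⟨0, 1⟩⟩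
noncomputable instance : Mul (W m) := ⟨fun x y => ⟨x.a + shift x.g y.a, x.g * y.g⟩⟩
noncomputable instance : Inv (W m) := ⟨fun x => ⟨-(shift x.g⁻¹ x.a), x.g⁻¹⟩⟩

lemma W.mul_def (x y : W m) : x * y = ⟨x.a + shift x.g y.a, x.g * y.g⟩ := rfl
lemma W.one_def : (1 : W m) = ⟨0, 1⟩ := rfl
lemma W.inv_def (x : W m) : x⁻¹ = ⟨-(shift x.g⁻¹ x.a), x.g⁻¹⟩ := rfl

noncomputable instance : Group (W m) :=
  Group.ofLeftAxioms
    (fun x y z => by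
      simp only [W.mul_def, map_add, shift_shift, mul_assoc, add_assoc])
    (fun x => by simp [W.mul_def, W.one_def, shift_one])
    (fun x => by
      simp only [W.inv_def, W.mul_def, W.one_def, map_neg, shift_shift, inv_mul_cancel]
      simp [shift_one])

/-- The tautological crossed homomorphism, packaged as a homomorphism to `W`. -/
noncomputable def Phi : FG m →* W m :=
  FreeGroup.lift (fun j => ⟨Finsupp.single ((1 : FG m), j) 1, FreeGroup.of j⟩)

def Wsnd : W m →* FG m :=
  { toFun := W.g, map_one' := rfl, map_mul' := fun _ _ => rfl }

lemma Phi_g (w : FG m) : (Phi w).g = w := by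
  have : (Wsnd.comp Phi : FG m →* FG m) = MonoidHom.id _ := by
    apply FreeGroup.ext_hom
    intro j
    simp [Wsnd, Phi, FreeGroup.lift_apply_of]
  exact congrArg (fun f => f w) (congrArg DFunLike.coe this) |>.trans rfl

/-- The edge-counting function. -/
noncomputable def ctil (w : FG m) : Mp m := (Phi w).a

lemma ctil_of (j : Fin (m + 1)) : ctil (FreeGroup.of j) = Finsupp.single ((1 : FG m), j) 1 := by
  simp [ctil, Phi, FreeGroup.lift_apply_of]

lemma ctil_one : ctil (1 : FG m) = 0 := by
  simp only [ctil, map_one]; rfl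

lemma ctil_mul (u v : FG m) : ctil (u * v) = ctil u + shift u (ctil v) := by
  have h := map_mul Phi u v
  have : (Phi (u * v)).a = (Phi u).a + shift (Phi u).g (Phi v).a := by rw [h]; rfl
  rw [ctil, this, Phi_g]; rfl

lemma ctil_inv (u : FG m) : ctil u⁻¹ = -(shift u⁻¹ (ctil u)) := by
  have h := map_inv Phi u
  have : (Phi u⁻¹).a = -(shift (Phi u).g⁻¹ (Phi u).a) := by rw [h]; rfl
  rw [ctil, this, Phi_g]; rfl



section
variable {m : ℕ} (B : Subgroup (FG m))

abbrev Qr := Quotient (QuotientGroup.rightRel B)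

noncomputable def qmk : FG m → Qr B := Quotient.mk''

lemma qmk_eq_qmk {p p' : FG m} : qmk B p = qmk B p' ↔ p' * p⁻¹ ∈ B := by
  unfold qmk
  rw [Quotient.eq'']
  exact QuotientGroup.rightRel_apply

lemma qmk_mul_left {u : FG m} (hu : u ∈ B) (p : FG m) :
    qmk B (u * p) = qmk B p := by
  rw [qmk_eq_qmk]
  simpa using B.inv_mem hu

lemma qmk_out (q : Qr B) : qmk B (Quotient.out q) = q := Quotient.out_eq' q

lemma mem_of_qmk_eq_one {w : FG m} (h : qmk B w = qmk B 1) : w ∈ B := by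
  have := (qmk_eq_qmk B).mp h.symm
  simpa using this

/-- The coset-level module. -/
abbrev Mq := (Qr B × Fin (m + 1)) → ZMod 2

/-- Pushforward from the free-group level to the coset level. -/
noncomputable def proj : Mp m →+ Mq B :=
  (Finsupp.coeFnAddHom).comp
    (Finsupp.mapDomain.addMonoidHom (fun pj : FG m × Fin (m+1) => (qmk B pj.1, pj.2)))

lemma proj_shift {u : FG m} (hu : u ∈ B) (a : Mp m) :
    proj B (shift u a) = proj B a := by
  simp only [proj, shift, MonoidHom.coe_comp, AddMonoidHom.coe_comp, Function.comp_apply,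
    Finsupp.mapDomain.addMonoidHom_apply]
  rw [← Finsupp.mapDomain_comp]
  congr 2
  funext pj
  simp [Function.comp, qmk_mul_left B hu]

open scoped Classical in
lemma proj_single (p : FG m) (j : Fin (m+1)) :
    proj B (Finsupp.single (p, j) 1) = Pi.single (qmk B p, j) (1 : ZMod 2) := by
  simp only [proj, AddMonoidHom.coe_comp, Function.comp_apply,
    Finsupp.mapDomain.addMonoidHom_apply, Finsupp.mapDomain_single]
  show ⇑(Finsupp.single ((qmk B p, j)) (1 : ZMod 2)) = _
  exact Finsupp.single_eq_pi_single _ _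

/-- The coset-level cocycle. -/
noncomputable def cc (w : FG m) : Mq B := proj B (ctil w)

lemma cc_one : cc B (1 : FG m) = 0 := by simp [cc, ctil_one]

lemma cc_mul {u : FG m} (hu : u ∈ B) (v : FG m) : cc B (u * v) = cc B u + cc B v := by
  simp [cc, ctil_mul, proj_shift B hu]

lemma cc_inv {u : FG m} (hu : u ∈ B) : cc B u⁻¹ = -(cc B u) := by
  simp [cc, ctil_inv, proj_shift B (B.inv_mem hu)]

end
section Key
open Module Submodule
variable {m : ℕ} (B : Subgroup (FG m)) (hB : B.index ≠ 0)

/-- The per-coset correction term. -/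
noncomputable def gq (q : Qr B) : Mq B := cc B (Quotient.out q)

lemma wqj_mem (q : Qr B) (j : Fin (m+1)) :
    Quotient.out q * FreeGroup.of j * (Quotient.out (qmk B (Quotient.out q * FreeGroup.of j)))⁻¹
      ∈ B := by
  exact (qmk_eq_qmk B).mp (qmk_out B (qmk B (Quotient.out q * FreeGroup.of j)))

open scoped Classical in
lemma single_eq (q : Qr B) (j : Fin (m+1)) :
    Pi.single (q, j) (1 : ZMod 2)
      = cc B (Quotient.out q * FreeGroup.of j
          * (Quotient.out (qmk B (Quotient.out q * FreeGroup.of j)))⁻¹)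
        - gq B q + gq B (qmk B (Quotient.out q * FreeGroup.of j)) := by
  set p := Quotient.out q with hp
  set s := Quotient.out (qmk B (p * FreeGroup.of j)) with hs
  have hctil : ctil (p * FreeGroup.of j * s⁻¹)
      = ctil p + shift p (Finsupp.single ((1 : FG m), j) 1)
        + shift (p * FreeGroup.of j) (-(shift s⁻¹ (ctil s))) := by
    rw [ctil_mul, ctil_mul, ctil_of, ctil_inv]
  have hcc : cc B (p * FreeGroup.of j * s⁻¹)
      = gq B q + Pi.single (q, j) (1 : ZMod 2) - gq B (qmk B (p * FreeGroup.of j)) := by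
    unfold cc
    rw [hctil, map_add, map_add]
    have h1 : proj B (ctil p) = gq B q := rfl
    have h2 : proj B (shift p (Finsupp.single ((1 : FG m), j) 1))
        = Pi.single (q, j) (1 : ZMod 2) := by
      rw [shift_single, mul_one, proj_single, hp, qmk_out]
    have h3 : proj B (shift (p * FreeGroup.of j) (-(shift s⁻¹ (ctil s))))
        = -(gq B (qmk B (p * FreeGroup.of j))) := by
      rw [map_neg, map_neg, shift_shift]
      have hw := wqj_mem B q j
      rw [proj_shift B hw]
      have : proj B (ctil s) = gq B (qmk B (p * FreeGroup.of j)) := rfl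
      rw [this]
    rw [h1, h2, h3]
    abel
  rw [hcc]
  abel

open scoped Classical in
theorem key (hB : B.index ≠ 0) (S : Finset (FG m)) (hS : Subgroup.closure (S : Set (FG m)) = B) :
    B.index * m + 1 ≤ S.card := by
  haveI : B.FiniteIndex := ⟨hB⟩
  haveI : Finite (FG m ⧸ B) := B.finite_quotient_of_finiteIndex
  haveI : Finite (Qr B) :=
    Finite.of_equiv _ (QuotientGroup.quotientRightRelEquivQuotientLeftRel B).symm
  haveI : Fintype (Qr B) := Fintype.ofFinite _
  have hcard : Fintype.card (Qr B) = B.index := by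
    rw [← Nat.card_eq_fintype_card,
      Nat.card_congr (QuotientGroup.quotientRightRelEquivQuotientLeftRel B),
      Subgroup.index_eq_card]
  set V : Submodule (ZMod 2) (Mq B) := span (ZMod 2) (cc B '' (B : Set (FG m))) with hV
  set Wsp : Submodule (ZMod 2) (Mq B) :=
    span (ZMod 2) (↑(Finset.image (gq B) (Finset.univ.erase (qmk B 1))) : Set (Mq B)) with hW
  have hccV : ∀ w : FG m, w ∈ B → cc B w ∈ V := fun w hw =>
    subset_span ⟨w, hw, rfl⟩
  have hgq : ∀ q : Qr B, gq B q ∈ V ⊔ Wsp := by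
    intro q
    by_cases hq : q = qmk B 1
    · have : Quotient.out q ∈ B := by
        apply mem_of_qmk_eq_one B
        rw [qmk_out, hq]
      exact le_sup_left (α := Submodule (ZMod 2) (Mq B)) (hccV _ this)
    · refine le_sup_right (α := Submodule (ZMod 2) (Mq B)) (subset_span ?_)
      rw [Finset.coe_image]
      exact ⟨q, by simpa using hq, rfl⟩
  have htop : (⊤ : Submodule (ZMod 2) (Mq B)) = V ⊔ Wsp := by
    refine le_antisymm ?_ le_top
    rw [← Basis.span_eq (Pi.basisFun (ZMod 2) (Qr B × Fin (m+1)))]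
    rw [span_le]
    rintro x ⟨e, rfl⟩
    rw [Pi.basisFun_apply]
    obtain ⟨q, j⟩ := e
    rw [single_eq B q j]
    have h1 : cc B (Quotient.out q * FreeGroup.of j
        * (Quotient.out (qmk B (Quotient.out q * FreeGroup.of j)))⁻¹) ∈ V ⊔ Wsp :=
      le_sup_left (α := Submodule (ZMod 2) (Mq B)) (hccV _ (wqj_mem B q j))
    exact add_mem (sub_mem h1 (hgq q)) (hgq _)
  have hMq : finrank (ZMod 2) (Mq B) = B.index * (m+1) := by
    rw [Module.finrank_pi, Fintype.card_prod, hcard, Fintype.card_fin]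
  have hsup : finrank (ZMod 2) (Mq B) ≤ finrank (ZMod 2) V + finrank (ZMod 2) Wsp := by
    have h := Submodule.finrank_sup_add_finrank_inf_eq V Wsp
    have h2 : finrank (ZMod 2) (Mq B) = finrank (ZMod 2) ↥(V ⊔ Wsp) := by
      rw [← htop, finrank_top]
    omega
  have hWsp : finrank (ZMod 2) Wsp ≤ B.index - 1 := by
    refine le_trans (finrank_span_finset_le_card _) ?_
    refine le_trans Finset.card_image_le ?_
    rw [Finset.card_erase_of_mem (Finset.mem_univ _), Finset.card_univ, hcard]
  have hVlow : B.index * m + 1 ≤ finrank (ZMod 2) V := by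
    have hipos : 1 ≤ B.index := Nat.one_le_iff_ne_zero.mpr hB
    have : B.index * (m+1) = B.index * m + B.index := by ring
    omega
  have hVup : finrank (ZMod 2) V ≤ S.card := by
    have hsub : V ≤ span (ZMod 2) (↑(S.image (cc B)) : Set (Mq B)) := by
      rw [hV, span_le]
      rintro x ⟨w, hw, rfl⟩
      rw [← hS] at hw
      induction hw using Subgroup.closure_induction with
      | mem g hg => exact subset_span (by
          rw [Finset.coe_image]; exact ⟨g, hg, rfl⟩)
      | one => rw [cc_one]; exact zero_mem _
      | mul x y hx hy px py =>
          rw [cc_mul B (by rw [← hS]; exact hx)]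
          exact add_mem px py
      | inv x hx px =>
          rw [cc_inv B (by rw [← hS]; exact hx)]
          exact neg_mem px
    refine le_trans (Submodule.finrank_mono hsub) ?_
    refine le_trans (finrank_span_finset_le_card _) Finset.card_image_le
  omega

end Key

end RGaux

namespace RGaux

variable {G : Type*} [Group G] {G' : Type*} [Group G']

lemma dGen_le {S : Finset G} (h : Subgroup.closure (S : Set G) = ⊤) :
    dGen G ≤ S.card := Nat.sInf_le ⟨S, rfl, h⟩

lemma dGen_spec (hG : Group.FG G) :
    ∃ S : Finset G, S.card = dGen G ∧ Subgroup.closure (S : Set G) = ⊤ := by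
  obtain ⟨n, S, hc, hcl⟩ := Group.fg_iff'.mp hG
  have hne : {n : ℕ | ∃ S : Finset G, S.card = n ∧ Subgroup.closure (S : Set G) = ⊤}.Nonempty :=
    ⟨n, S, hc, hcl⟩
  obtain ⟨S', hc', hcl'⟩ := Nat.sInf_mem hne
  exact ⟨S', hc', hcl'⟩

lemma closure_image_eq_top (f : G →* G') (hf : Function.Surjective f) {S : Finset G}
    (h : Subgroup.closure (S : Set G) = ⊤) [DecidableEq G'] :
    Subgroup.closure ((S.image f : Finset G') : Set G') = ⊤ := by
  rw [Finset.coe_image, ← MonoidHom.map_closure, h]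
  rw [← MonoidHom.range_eq_map, MonoidHom.range_eq_top]
  exact hf

lemma dGen_le_of_surjective (f : G →* G') (hf : Function.Surjective f) (hG : Group.FG G) :
    dGen G' ≤ dGen G := by
  classical
  obtain ⟨S, hc, hcl⟩ := dGen_spec hG
  calc dGen G' ≤ (S.image f).card := dGen_le (closure_image_eq_top f hf hcl)
  _ ≤ S.card := Finset.card_image_le
  _ = dGen G := hc

lemma dGen_congr (e : G ≃* G') : dGen G = dGen G' := by
  classical
  unfold dGen
  congr 1
  ext n
  constructor
  · rintro ⟨S, hc, hcl⟩
    refine ⟨S.image e, ?_, ?_⟩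
    · rw [Finset.card_image_of_injective _ e.injective, hc]
    · exact closure_image_eq_top e.toMonoidHom e.surjective hcl
  · rintro ⟨S, hc, hcl⟩
    refine ⟨S.image e.symm, ?_, ?_⟩
    · rw [Finset.card_image_of_injective _ e.symm.injective, hc]
    · exact closure_image_eq_top e.symm.toMonoidHom e.symm.surjective hcl

instance freeGroup_fg {m : ℕ} : Group.FG (FG m) := by
  classical
  rw [Group.fg_iff']
  refine ⟨m + 1, Finset.univ.image FreeGroup.of, ?_, ?_⟩
  · rw [Finset.card_image_of_injective _ FreeGroup.of_injective, Finset.card_univ,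
      Fintype.card_fin]
  · rw [Finset.coe_image, Finset.coe_univ, Set.image_univ]
    exact FreeGroup.closure_range_of _

lemma inl_range_sup_inr_range :
    (MonoidHom.inl G G').range ⊔ (MonoidHom.inr G G').range = ⊤ := by
  rw [eq_top_iff]
  rintro ⟨g, g'⟩ -
  have : (g, g') = (MonoidHom.inl G G' g) * (MonoidHom.inr G G' g') := by
    simp [MonoidHom.inl, MonoidHom.inr, Prod.ext_iff]
  rw [this]
  exact mul_mem (Subgroup.mem_sup_left ⟨g, rfl⟩) (Subgroup.mem_sup_right ⟨g', rfl⟩)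

instance prod_fg {A : Type*} [Group A] [Group.FG G] [Group.FG A] : Group.FG (G × A) := by
  classical
  obtain ⟨S₁, _, h₁⟩ := dGen_spec (inferInstance : Group.FG G)
  obtain ⟨S₂, _, h₂⟩ := dGen_spec (inferInstance : Group.FG A)
  rw [Group.fg_iff']
  refine ⟨_, (S₁.image (MonoidHom.inl G A)) ∪ (S₂.image (MonoidHom.inr G A)), rfl, ?_⟩
  rw [Finset.coe_union, Subgroup.closure_union, Finset.coe_image, Finset.coe_image,
    ← MonoidHom.map_closure, ← MonoidHom.map_closure, h₁, h₂,
    ← MonoidHom.range_eq_map, ← MonoidHom.range_eq_map]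
  exact inl_range_sup_inr_range

/-- `dGen` of a finite-index subgroup of the free group. -/
theorem key_dGen {m : ℕ} (B : Subgroup (FG m)) (hB : B.index ≠ 0) :
    B.index * m + 1 ≤ dGen B := by
  classical
  haveI : B.FiniteIndex := ⟨hB⟩
  obtain ⟨T, hTc, hTcl⟩ := dGen_spec (Subgroup.fg_of_index_ne_zero B)
  have hS : Subgroup.closure ((T.image B.subtype : Finset (FG m)) : Set (FG m)) = B := by
    rw [Finset.coe_image, ← MonoidHom.map_closure, hTcl, ← MonoidHom.range_eq_map,
      Subgroup.range_subtype]
  have := key B hB (T.image B.subtype) hS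
  calc B.index * m + 1 ≤ (T.image B.subtype).card := this
  _ ≤ T.card := Finset.card_image_le
  _ = dGen B := hTc

theorem dGen_freeGroup (m : ℕ) : dGen (FG m) = m + 1 := by
  classical
  refine le_antisymm ?_ ?_
  · have : Subgroup.closure ((Finset.univ.image FreeGroup.of : Finset (FG m)) : Set (FG m))
        = ⊤ := by
      rw [Finset.coe_image, Finset.coe_univ, Set.image_univ]
      exact FreeGroup.closure_range_of _
    calc dGen (FG m) ≤ (Finset.univ.image (FreeGroup.of (α := Fin (m+1)))).card := dGen_le this
    _ = m + 1 := by
      rw [Finset.card_image_of_injective _ FreeGroup.of_injective, Finset.card_univ,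
        Fintype.card_fin]
  · obtain ⟨S, hc, hcl⟩ := dGen_spec (inferInstance : Group.FG (FG m))
    have h := key (⊤ : Subgroup (FG m)) (by rw [Subgroup.index_top]; exact one_ne_zero) S
      (by rw [hcl])
    rw [Subgroup.index_top, one_mul] at h
    omega



section Main

variable {m n : ℕ}

/-- Lower bound for each finite-index subgroup. -/
theorem dGen_lower (A : Type*) [Group A] [Finite A] (hA : Nat.card A = n) (hn : 0 < n)
    (H : Subgroup (FG m × A)) (hHi : H.index ≠ 0) :
    ∃ b j : ℕ, b ≠ 0 ∧ j ≠ 0 ∧ j ≤ n ∧ H.index = j * b ∧ b * m + 1 ≤ dGen H := by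
  classical
  haveI : Group.FG (FG m × A) := prod_fg
  haveI : H.FiniteIndex := ⟨hHi⟩
  set π := MonoidHom.fst (FG m) A with hπ
  have hπsurj : Function.Surjective π := fun x => ⟨(x, 1), rfl⟩
  set B := Subgroup.map π H with hBdef
  have hHB : H ≤ Subgroup.comap π B := fun h hh => Subgroup.mem_map_of_mem π hh
  have hb : B.index ≠ 0 := by
    intro h0
    have : (Subgroup.comap π B).index = 0 := by
      rw [Subgroup.index_comap_of_surjective _ hπsurj, h0]
    have hdvd := Subgroup.index_dvd_of_le hHB
    rw [this] at hdvd
    exact hHi (zero_dvd_iff.mp hdvd)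
  -- surjection H ↠ B
  have hsurj2 : dGen B ≤ dGen H :=
    dGen_le_of_surjective (π.subgroupMap H) (π.subgroupMap_surjective H)
      (Subgroup.fg_of_index_ne_zero H)
  set M := B.prod (⊤ : Subgroup A) with hM
  have hHM : H ≤ M := by
    rintro ⟨f, a⟩ hfa
    exact Subgroup.mem_prod.mpr ⟨Subgroup.mem_map_of_mem π hfa, trivial⟩
  have hMidx : M.index = B.index := by
    rw [hM, Subgroup.index_prod, Subgroup.index_top, mul_one]
  have hrel : H.relIndex M * B.index = H.index := by
    rw [← hMidx]; exact Subgroup.relIndex_mul_index hHM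
  have hreln : H.relIndex M ≤ n := by
    rw [Subgroup.relIndex, Subgroup.index_eq_card, ← hA]
    refine Nat.card_le_card_of_surjective
      (fun a : A => QuotientGroup.mk (⟨((1 : FG m), a), Subgroup.mem_prod.mpr
        ⟨B.one_mem, trivial⟩⟩ : M)) ?_
    rintro x
    obtain ⟨⟨⟨f, a⟩, hfaM⟩, rfl⟩ := QuotientGroup.mk_surjective x
    have hfB : f ∈ B := (Subgroup.mem_prod.mp hfaM).1
    obtain ⟨⟨f', α⟩, hmem, hval⟩ := Subgroup.mem_map.mp hfB
    have hf' : f' = f := hval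
    refine ⟨a * α⁻¹, ?_⟩
    rw [QuotientGroup.eq]
    show (⟨((1 : FG m), a * α⁻¹), _⟩ : M)⁻¹ * ⟨(f, a), hfaM⟩ ∈ H.subgroupOf M
    rw [Subgroup.mem_subgroupOf]
    show ((1 : FG m), a * α⁻¹)⁻¹ * (f, a) ∈ H
    have : ((1 : FG m), a * α⁻¹)⁻¹ * (f, a) = (f, α) := by
      simp [Prod.ext_iff, mul_assoc]
    rw [this, ← hf']
    exact hmem
  have hj : H.relIndex M ≠ 0 := by
    intro h0; rw [h0, zero_mul] at hrel; exact hHi hrel.symm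
  exact ⟨B.index, H.relIndex M, hb, hj, hreln, hrel.symm, le_trans (key_dGen B hb) hsurj2⟩

theorem rankGradient_eq (m n : ℕ) (hn : 0 < n) (A : Type) [Group A]
    (hA : Nat.card A = n) :
    rankGradient (FG m × A) = (m : ℝ) / (n : ℝ) := by
  classical
  haveI : Finite A := Nat.finite_of_card_ne_zero (by rw [hA]; exact hn.ne')
  haveI : Group.FG (FG m × A) := prod_fg
  set R := {r : ℝ | ∃ H : Subgroup (FG m × A), H.index ≠ 0 ∧
      r = ((dGen H : ℝ) - 1) / (H.index : ℝ)} with hR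
  have hlow : ∀ r ∈ R, (m : ℝ) / (n : ℝ) ≤ r := by
    rintro r ⟨H, hHi, rfl⟩
    obtain ⟨b, j, hb, hj, hjn, hidx, hdg⟩ := dGen_lower A hA hn H hHi
    have hD1 : 1 ≤ dGen H := le_trans (Nat.le_add_left 1 _) hdg
    have hnat : m * H.index ≤ (dGen H - 1) * n := by
      have h1 : b * m ≤ dGen H - 1 := by omega
      calc m * H.index = j * (b * m) := by rw [hidx]; ring
      _ ≤ n * (dGen H - 1) := Nat.mul_le_mul hjn h1
      _ = (dGen H - 1) * n := by ring
    rw [div_le_div_iff₀ (by exact_mod_cast hn) (by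
      exact_mod_cast Nat.pos_of_ne_zero hHi)]
    have hcast : ((dGen H : ℝ) - 1) = ((dGen H - 1 : ℕ) : ℝ) := by
      rw [Nat.cast_sub hD1, Nat.cast_one]
    rw [hcast]
    exact_mod_cast hnat
  have hmem : (m : ℝ) / (n : ℝ) ∈ R := by
    refine ⟨(MonoidHom.inl (FG m) A).range, ?_, ?_⟩
    · have : (MonoidHom.inl (FG m) A).range = (⊤ : Subgroup (FG m)).prod ⊥ := by
        ext ⟨f, a⟩
        simp only [MonoidHom.mem_range, Subgroup.mem_prod, Subgroup.mem_top, true_and,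
          Subgroup.mem_bot]
        constructor
        · rintro ⟨w, hw⟩
          exact (congrArg Prod.snd hw).symm
        · rintro rfl
          exact ⟨f, rfl⟩
      rw [this, Subgroup.index_prod, Subgroup.index_top, Subgroup.index_bot, one_mul, hA]
      exact hn.ne'
    · have hinj : Function.Injective (MonoidHom.inl (FG m) A) := fun a b h =>
        congrArg Prod.fst h
      have he : dGen ((MonoidHom.inl (FG m) A).range) = m + 1 := by
        rw [← dGen_congr (MonoidHom.ofInjective hinj), dGen_freeGroup]
      have hidx : ((MonoidHom.inl (FG m) A).range).index = n := by
        have : (MonoidHom.inl (FG m) A).range = (⊤ : Subgroup (FG m)).prod ⊥ := by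
          ext ⟨f, a⟩
          simp only [MonoidHom.mem_range, Subgroup.mem_prod, Subgroup.mem_top, true_and,
            Subgroup.mem_bot]
          constructor
          · rintro ⟨w, hw⟩
            exact (congrArg Prod.snd hw).symm
          · rintro rfl
            exact ⟨f, rfl⟩
        rw [this, Subgroup.index_prod, Subgroup.index_top, Subgroup.index_bot, one_mul, hA]
      rw [he, hidx]
      push_cast
      ring
  have hne : R.Nonempty := ⟨_, hmem⟩
  have hbdd : BddBelow R := ⟨(m : ℝ) / (n : ℝ), hlow⟩
  exact le_antisymm (csInf_le hbdd hmem) (le_csInf hne hlow)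

end Main


section FP

theorem fp (k nn : ℕ) (hn : 0 < nn) :
    IsFinitelyPresentedGroup (FreeGroup (Fin (k + 1)) × Multiplicative (ZMod nn)) := by
  classical
  haveI : NeZero nn := ⟨hn.ne'⟩
  set G := FreeGroup (Fin (k + 1)) × Multiplicative (ZMod nn) with hG
  set g₀ : Multiplicative (ZMod nn) := Multiplicative.ofAdd 1 with hg₀
  set gen : Fin (k + 2) → G :=
    Fin.lastCases ((1 : FreeGroup (Fin (k + 1))), g₀) (fun j => (FreeGroup.of j, 1)) with hgen
  set f : FreeGroup (Fin (k + 2)) →* G := FreeGroup.lift gen with hf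
  set S : Finset (FreeGroup (Fin (k + 2))) :=
    insert ((FreeGroup.of (Fin.last (k + 1))) ^ nn)
      (Finset.image
        (fun j : Fin (k + 1) =>
          ⁅FreeGroup.of j.castSucc, FreeGroup.of (Fin.last (k + 1))⁆) Finset.univ) with hS
  have hfcast : ∀ j : Fin (k + 1), f (FreeGroup.of j.castSucc) = (FreeGroup.of j, 1) := by
    intro j
    simp only [hf, FreeGroup.lift_apply_of, hgen, Fin.lastCases_castSucc]
  have hflast : f (FreeGroup.of (Fin.last (k + 1))) = (1, g₀) := by
    simp only [hf, FreeGroup.lift_apply_of, hgen, Fin.lastCases_last]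
  have hg₀pow : ∀ v : ℕ, g₀ ^ v = Multiplicative.ofAdd ((v : ZMod nn)) := by
    intro v
    rw [hg₀, ← ofAdd_nsmul, nsmul_eq_mul, mul_one]
  refine ⟨k + 2, f, S, ?_, ?_⟩
  · -- surjectivity
    rintro ⟨w, a⟩
    have h1 : f (FreeGroup.map Fin.castSucc w) = (w, 1) := by
      have : (f.comp (FreeGroup.map Fin.castSucc) :
          FreeGroup (Fin (k + 1)) →* G)
          = MonoidHom.inl (FreeGroup (Fin (k + 1))) (Multiplicative (ZMod nn)) := by
        apply FreeGroup.ext_hom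
        intro j
        simp only [MonoidHom.comp_apply, FreeGroup.map.of, MonoidHom.inl_apply]
        exact hfcast j
      calc f (FreeGroup.map Fin.castSucc w)
          = (f.comp (FreeGroup.map Fin.castSucc)) w := rfl
        _ = (w, 1) := by rw [this]; rfl
    refine ⟨FreeGroup.map Fin.castSucc w
      * (FreeGroup.of (Fin.last (k + 1))) ^ (Multiplicative.toAdd a).val, ?_⟩
    rw [map_mul, h1, map_pow, hflast]
    have : ((1 : FreeGroup (Fin (k + 1))), g₀) ^ ((Multiplicative.toAdd a).val)
        = (1, g₀ ^ (Multiplicative.toAdd a).val) := by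
      rw [Prod.pow_mk, one_pow]
    rw [this, hg₀pow, ZMod.natCast_val, ZMod.cast_id]
    show (w * 1, 1 * Multiplicative.ofAdd (Multiplicative.toAdd a)) = (w, a)
    rw [mul_one, one_mul, ofAdd_toAdd]
  · -- kernel
    set N := Subgroup.normalClosure (S : Set (FreeGroup (Fin (k + 2)))) with hN
    haveI : N.Normal := Subgroup.normalClosure_normal
    have step1 : N ≤ f.ker := by
      apply Subgroup.normalClosure_le_normal
      intro x hx
      rw [Finset.coe_insert] at hx
      rcases hx with hx | hx
      · subst hx
        rw [SetLike.mem_coe, MonoidHom.mem_ker, map_pow, hflast]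
        have : ((1 : FreeGroup (Fin (k + 1))), g₀) ^ nn = (1, g₀ ^ nn) := by
          rw [Prod.pow_mk, one_pow]
        rw [this, hg₀pow, ZMod.natCast_self]
        rfl
      · rw [Finset.coe_image] at hx
        obtain ⟨j, -, rfl⟩ := hx
        rw [SetLike.mem_coe, MonoidHom.mem_ker, map_commutatorElement, hfcast, hflast,
          commutatorElement_eq_one_iff_commute]
        show (FreeGroup.of j, (1 : Multiplicative (ZMod nn)))
            * ((1 : FreeGroup (Fin (k + 1))), g₀) = _
        rw [Prod.mk_mul_mk, Prod.mk_mul_mk, mul_one, one_mul, mul_one, one_mul]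
    have step2 : f.ker ≤ N := by
      set π := QuotientGroup.mk' N with hπ
      set φ₁ : FreeGroup (Fin (k + 1)) →* FreeGroup (Fin (k + 2)) ⧸ N :=
        FreeGroup.lift (fun j => π (FreeGroup.of j.castSucc)) with hφ₁
      set α : FreeGroup (Fin (k + 2)) ⧸ N := π (FreeGroup.of (Fin.last (k + 1))) with hα
      have hr₀ : ((FreeGroup.of (Fin.last (k + 1))) ^ nn : FreeGroup (Fin (k + 2))) ∈ N :=
        Subgroup.subset_normalClosure (by
          rw [Finset.coe_insert]; exact Or.inl rfl)
      have hαn : α ^ nn = 1 := by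
        rw [hα, ← map_pow, QuotientGroup.mk'_apply]
        exact (QuotientGroup.eq_one_iff _).mpr hr₀
      have hmod : ∀ t : ℕ, α ^ (t % nn) = α ^ t := by
        intro t
        conv_rhs => rw [← Nat.div_add_mod t nn]
        rw [pow_add, pow_mul, hαn, one_pow, one_mul]
      set φ₂ : Multiplicative (ZMod nn) →* FreeGroup (Fin (k + 2)) ⧸ N :=
        { toFun := fun a => α ^ (Multiplicative.toAdd a).val
          map_one' := by
            show α ^ (Multiplicative.toAdd (1 : Multiplicative (ZMod nn))).val = 1
            rw [toAdd_one, ZMod.val_zero, pow_zero]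
          map_mul' := fun a b => by
            show α ^ (Multiplicative.toAdd (a * b)).val
              = α ^ (Multiplicative.toAdd a).val * α ^ (Multiplicative.toAdd b).val
            rw [toAdd_mul, ZMod.val_add, hmod, pow_add] } with hφ₂
      have hcommgen : ∀ j : Fin (k + 1), Commute (π (FreeGroup.of j.castSucc)) α := by
        intro j
        rw [← commutatorElement_eq_one_iff_commute, hα, ← map_commutatorElement,
          QuotientGroup.mk'_apply, QuotientGroup.eq_one_iff]
        apply Subgroup.subset_normalClosure
        rw [Finset.coe_insert]
        right
        rw [Finset.coe_image]
        exact ⟨j, Finset.mem_coe.mpr (Finset.mem_univ j), rfl⟩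
      have hcomm : ∀ w : FreeGroup (Fin (k + 1)), Commute (φ₁ w) α := by
        intro w
        have hw : w ∈ Subgroup.closure (Set.range (FreeGroup.of (α := Fin (k + 1)))) := by
          rw [FreeGroup.closure_range_of]; trivial
        induction hw using Subgroup.closure_induction with
        | mem x hx =>
            obtain ⟨j, rfl⟩ := hx
            rw [hφ₁, FreeGroup.lift_apply_of]
            exact hcommgen j
        | one => rw [map_one]; exact Commute.one_left α
        | mul x y hx hy px py => rw [map_mul]; exact px.mul_left py
        | inv x hx px => rw [map_inv]; exact px.inv_left
      set ψ : G →* FreeGroup (Fin (k + 2)) ⧸ N :=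
        { toFun := fun p => φ₁ p.1 * φ₂ p.2
          map_one' := by
            show φ₁ 1 * φ₂ 1 = 1
            rw [map_one, map_one, one_mul]
          map_mul' := fun p q => by
            show φ₁ (p.1 * q.1) * φ₂ (p.2 * q.2) = (φ₁ p.1 * φ₂ p.2) * (φ₁ q.1 * φ₂ q.2)
            have hc : Commute (φ₂ p.2) (φ₁ q.1) := by
              show Commute (α ^ (Multiplicative.toAdd p.2).val) (φ₁ q.1)
              exact ((hcomm q.1).pow_right _).symm
            rw [map_mul, map_mul, mul_assoc, mul_assoc, ← mul_assoc (φ₂ p.2), hc.eq,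
              mul_assoc] } with hψ
      have hψf : ∀ x, ψ (f x) = π x := by
        intro x
        have : (ψ.comp f : FreeGroup (Fin (k + 2)) →* FreeGroup (Fin (k + 2)) ⧸ N) = π := by
          apply FreeGroup.ext_hom
          intro i
          induction i using Fin.lastCases with
          | last =>
              rw [MonoidHom.comp_apply, hflast]
              show φ₁ 1 * φ₂ g₀ = π (FreeGroup.of (Fin.last (k + 1)))
              rw [map_one, one_mul, hφ₂]
              show α ^ (Multiplicative.toAdd g₀).val = _
              rw [hg₀]
              show α ^ ((1 : ZMod nn)).val = _
              rw [show ((1 : ZMod nn)) = ((1 : ℕ) : ZMod nn) by rw [Nat.cast_one],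
                ZMod.val_natCast, hmod, pow_one, hα]
          | cast j =>
              rw [MonoidHom.comp_apply, hfcast]
              show φ₁ (FreeGroup.of j) * φ₂ 1 = π (FreeGroup.of j.castSucc)
              rw [map_one, mul_one, hφ₁, FreeGroup.lift_apply_of]
        calc ψ (f x) = (ψ.comp f) x := rfl
          _ = π x := by rw [this]
      intro x hx
      rw [MonoidHom.mem_ker] at hx
      have h1 : π x = 1 := by rw [← hψf, hx, map_one]
      rw [hπ, QuotientGroup.mk'_apply] at h1
      rwa [← QuotientGroup.eq_one_iff x]
    exact le_antisymm step2 step1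

end FP
end RGaux


/-- every positive rational `q` is the rank gradient of a finitely presented
group; in fact if `q = m/n` then `G = F_{m+1} × A` with `|A| = n` has `RG(G) = m/n`. -/
theorem rankGradient_rational (q : ℚ) (hq : 0 < q) :
    (∃ (G : Type) (inst : Group G),
        @IsFinitelyPresentedGroup G inst ∧ @rankGradient G inst = (q : ℝ)) ∧
    (∀ m n : ℕ, 0 < m → 0 < n → (q : ℝ) = (m : ℝ) / (n : ℝ) →
      ∀ (A : Type) [Group A], Nat.card A = n →
        rankGradient (FreeGroup (Fin (m + 1)) × A) = (m : ℝ) / (n : ℝ)) := by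
  constructor
  · set M := q.num.toNat with hM
    have hnum : 0 < q.num := Rat.num_pos.mpr hq
    have hMnum : (M : ℤ) = q.num := Int.toNat_of_nonneg hnum.le
    refine ⟨FreeGroup (Fin (M + 1)) × Multiplicative (ZMod q.den), inferInstance, ?_, ?_⟩
    · exact RGaux.fp M q.den q.den_pos
    · have hA : Nat.card (Multiplicative (ZMod q.den)) = q.den := by
        rw [Nat.card_congr Multiplicative.toAdd, Nat.card_zmod]
      have h := RGaux.rankGradient_eq M q.den q.den_pos (Multiplicative (ZMod q.den)) hA
      rw [h, Rat.cast_def, ← hMnum]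
      push_cast
      ring
  · intro m n hm hn hq' A instA hA
    exact RGaux.rankGradient_eq m n hn A hA
end

section
/- Let G be a finitely generated group, p a prime, and let N be the intersection of all normal subgroups of G of index a power of p (the p-residual of G). Then RG_p(G) = RG_p(G/N). -/
open scoped commutatorElement

section Aux

open Subgroup

variable {A B : Type*} [Group A] [Group B]

lemma genset_image (p : ℕ) (f : A →* B) (hf : Function.Surjective f) :
    f '' ({x | ∃ a b : A, x = ⁅a, b⁆} ∪ {x | ∃ g : A, x = g ^ p})
      = ({x | ∃ a b : B, x = ⁅a, b⁆} ∪ {x | ∃ g : B, x = g ^ p}) := by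
  ext y
  constructor
  · rintro ⟨x, (⟨a, b, rfl⟩ | ⟨g, rfl⟩), rfl⟩
    · exact Or.inl ⟨f a, f b, by simp [commutatorElement_def, map_mul]⟩
    · exact Or.inr ⟨f g, by simp [map_pow]⟩
  · rintro (⟨a, b, rfl⟩ | ⟨g, rfl⟩)
    · obtain ⟨a', rfl⟩ := hf a; obtain ⟨b', rfl⟩ := hf b
      exact ⟨⁅a', b'⁆, Or.inl ⟨a', b', rfl⟩, by simp [commutatorElement_def, map_mul]⟩
    · obtain ⟨g', rfl⟩ := hf g
      exact ⟨g' ^ p, Or.inr ⟨g', rfl⟩, by simp [map_pow]⟩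

lemma map_pCommPow (p : ℕ) (f : A →* B) (hf : Function.Surjective f) :
    (pCommPow p A).map f = pCommPow p B := by
  rw [pCommPow, Subgroup.map_normalClosure _ f hf, genset_image p f hf, pCommPow]

instance pCommPow_characteristic (p : ℕ) (A : Type*) [Group A] :
    (pCommPow p A).Characteristic :=
  Subgroup.characteristic_iff_map_eq.mpr fun φ => map_pCommPow p φ.toMonoidHom φ.surjective

lemma genSet_subset (e : A ≃* B) :
    {n : ℕ | ∃ S : Finset A, S.card = n ∧ Subgroup.closure (S : Set A) = ⊤} ⊆
    {n : ℕ | ∃ S : Finset B, S.card = n ∧ Subgroup.closure (S : Set B) = ⊤} := by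
  rintro n ⟨S, hcard, hcl⟩
  classical
  refine ⟨S.image e, by rw [Finset.card_image_of_injective _ e.injective, hcard], ?_⟩
  rw [Finset.coe_image]
  have h : ⇑e '' (S : Set A) = ⇑(e : A →* B) '' (S : Set A) := rfl
  rw [h, ← MonoidHom.map_closure (e : A →* B), hcl,
    Subgroup.map_top_of_surjective _ e.surjective]

lemma dGen_congr (e : A ≃* B) : dGen A = dGen B := by
  unfold dGen
  congr 1
  exact le_antisymm (genSet_subset e) (genSet_subset e.symm)

lemma dp_congr_of_surjective (p : ℕ) (f : A →* B) (hf : Function.Surjective f)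
    (hker : f.ker ≤ pCommPow p A) : dp p A = dp p B := by
  set g := (QuotientGroup.mk' (pCommPow p B)).comp f with hg
  have hgs : Function.Surjective g := (QuotientGroup.mk'_surjective _).comp hf
  have hkg : g.ker = pCommPow p A := by
    rw [hg, ← MonoidHom.comap_ker, QuotientGroup.ker_mk', ← map_pCommPow p f hf,
      Subgroup.comap_map_eq_self hker]
  have e1 : A ⧸ pCommPow p A ≃* A ⧸ g.ker := QuotientGroup.quotientMulEquivOfEq hkg.symm
  have e2 : A ⧸ g.ker ≃* B ⧸ pCommPow p B := QuotientGroup.quotientKerEquivOfSurjective g hgs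
  exact dGen_congr (e1.trans e2)

lemma pow_p_eq_one (p : ℕ) (q : A ⧸ pCommPow p A) : q ^ p = 1 := by
  obtain ⟨x, rfl⟩ := QuotientGroup.mk_surjective q
  rw [← QuotientGroup.mk_pow, QuotientGroup.eq_one_iff]
  exact Subgroup.subset_normalClosure (Or.inr ⟨x, rfl⟩)

lemma index_pCommPow (p : ℕ) (hp : p.Prime) (A : Type*) [Group A] [Group.FG A] :
    ∃ m : ℕ, (pCommPow p A).index = p ^ m := by
  set Q := A ⧸ pCommPow p A with hQ
  have hfg : Group.FG Q := inferInstance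
  letI : CommGroup Q :=
    { (inferInstance : Group Q) with
      mul_comm := by
        intro a b
        obtain ⟨x, rfl⟩ := QuotientGroup.mk_surjective a
        obtain ⟨y, rfl⟩ := QuotientGroup.mk_surjective b
        rw [← QuotientGroup.mk_mul, ← QuotientGroup.mk_mul, QuotientGroup.eq]
        have h : (x * y)⁻¹ * (y * x) = ⁅y⁻¹, x⁻¹⁆ := by group
        rw [h]
        exact Subgroup.subset_normalClosure (Or.inl ⟨y⁻¹, x⁻¹, rfl⟩) }
  have htor : Monoid.IsTorsion Q := fun q =>
    isOfFinOrder_iff_pow_eq_one.mpr ⟨p, hp.pos, pow_p_eq_one p q⟩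
  haveI : Finite Q := CommGroup.finite_of_fg_torsion Q htor
  haveI : Fact p.Prime := ⟨hp⟩
  have hpg : IsPGroup p Q := fun q => ⟨1, by rw [pow_one]; exact pow_p_eq_one p q⟩
  obtain ⟨n, hn⟩ := IsPGroup.iff_card.mp hpg
  exact ⟨n, by rw [Subgroup.index_eq_card, ← hQ, hn]⟩

end Aux

section Res

variable {G : Type*} [Group G]

lemma pResidual_le_of_mem (p : ℕ) {H : Subgroup G} (hN : H.Normal)
    (hk : ∃ k : ℕ, H.index = p ^ k) : pResidual p G ≤ H :=
  iInf₂_le H ⟨hN, hk⟩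

lemma pResidual_le_pCommPow_map [Group.FG G] (p : ℕ) (hp : p.Prime)
    (H : Subgroup G) (hN : H.Normal) (k : ℕ) (hk : H.index = p ^ k) :
    pResidual p G ≤ (pCommPow p H).map H.subtype := by
  haveI := hN
  haveI : H.FiniteIndex := ⟨by rw [hk]; exact pow_ne_zero k hp.ne_zero⟩
  haveI : Group.FG H := Subgroup.fg_of_index_ne_zero H
  obtain ⟨m, hm⟩ := index_pCommPow p hp H
  refine pResidual_le_of_mem p inferInstance ⟨m + k, ?_⟩
  have h1 := Subgroup.relIndex_mul_index (Subgroup.map_subtype_le (pCommPow p H))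
  have h2 : ((pCommPow p H).map H.subtype).relIndex H = (pCommPow p H).index := by
    rw [Subgroup.relIndex, Subgroup.subgroupOf,
      Subgroup.comap_map_eq_self_of_injective H.subtype_injective]
  rw [h2, hm, hk, ← pow_add] at h1
  exact h1.symm

lemma dp_map_residual [Group.FG G] (p : ℕ) (hp : p.Prime)
    (H : Subgroup G) (hN : H.Normal) (k : ℕ) (hk : H.index = p ^ k) :
    dp p H = dp p (H.map (QuotientGroup.mk' (pResidual p G))) := by
  set π := QuotientGroup.mk' (pResidual p G) with hπ
  refine dp_congr_of_surjective p (π.subgroupMap H) (π.subgroupMap_surjective H) ?_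
  intro x hx
  have hx1 : π (x : G) = 1 := by
    have := congrArg (Subtype.val) (show π.subgroupMap H x = 1 from hx)
    simpa using this
  have hxN : (x : G) ∈ pResidual p G := by
    have hker : π.ker = pResidual p G := QuotientGroup.ker_mk' _
    rw [← hker]
    exact hx1
  have hxK := pResidual_le_pCommPow_map p hp H hN k hk hxN
  obtain ⟨y, hy, hyx⟩ := hxK
  have : y = x := Subtype.ext hyx
  rwa [this] at hy

end Res

/-- a finitely generated group and its quotient by the `p`-residual
(its `p`-residualization) have the same `p`-gradient. -/
theorem pGradient_pResidualization (G : Type*) [Group G] [Group.FG G]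
    (p : ℕ) (hp : p.Prime) :
    pGradient p G = pGradient p (G ⧸ pResidual p G) := by
  have hπs : Function.Surjective (QuotientGroup.mk' (pResidual p G)) :=
    QuotientGroup.mk'_surjective _
  set π := QuotientGroup.mk' (pResidual p G) with hπ
  unfold pGradient
  congr 1
  ext r
  constructor
  · rintro ⟨H, hN, ⟨k, hk⟩, rfl⟩
    haveI := hN
    have hle : pResidual p G ≤ H := pResidual_le_of_mem p hN ⟨k, hk⟩
    have hcm : (H.map π).comap π = H := by
      apply Subgroup.comap_map_eq_self
      rwa [QuotientGroup.ker_mk']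
    refine ⟨H.map π, hN.map π hπs, ⟨k, ?_⟩, ?_⟩
    · rw [← Subgroup.index_comap_of_surjective _ hπs, hcm, hk]
    · rw [← dp_map_residual p hp H hN k hk,
        ← Subgroup.index_comap_of_surjective _ hπs, hcm]
  · rintro ⟨H', hN', ⟨k, hk⟩, rfl⟩
    set H := H'.comap π with hH
    have hNH : H.Normal := hN'.comap π
    have hidx : H.index = p ^ k := by
      rw [hH, Subgroup.index_comap_of_surjective _ hπs, hk]
    have hmp : H.map π = H' := Subgroup.map_comap_eq_self_of_surjective hπs H'
    refine ⟨H, hNH, ⟨k, hidx⟩, ?_⟩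
    have hd : dp p H = dp p H' := by
      rw [dp_map_residual p hp H hNH k hidx]
      congr 1 <;> rw [hmp]
    rw [hd, hidx, hk]
end

section
/- Fix a prime p and let G be a finitely generated group. If H ≤ G is a subnormal subgroup of index a power of p (i.e., there is a finite chain H = H_0 ⊴ H_1 ⊴ ... ⊴ H_n = G with each term normal in the next, and [G : H] is a power of p), then RG_p(G) = RG_p(H)/[G : H]. -/
open scoped commutatorElement

/-- `H` is subnormal in `G`: there is a finite chain from `H` to `G`,
each term normal in the next. -/
def IsSubnormal {G : Type*} [Group G] (H : Subgroup G) : Prop :=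
  ∃ (n : ℕ) (c : ℕ → Subgroup G), c 0 = H ∧ c n = ⊤ ∧
    ∀ i < n, c i ≤ c (i + 1) ∧ ((c i).subgroupOf (c (i + 1))).Normal

section Aux

open Subgroup

variable {p : ℕ} {G : Type*} [Group G]

/-! ### dGen basics -/

theorem dGen_le {S : Finset G} (h : Subgroup.closure (S : Set G) = ⊤) : dGen G ≤ S.card :=
  Nat.sInf_le ⟨S, rfl, h⟩

theorem exists_dGen (G : Type*) [Group G] [Group.FG G] :
    ∃ S : Finset G, S.card = dGen G ∧ Subgroup.closure (S : Set G) = ⊤ := by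
  have hne : ∃ n, n ∈ {n : ℕ | ∃ S : Finset G, S.card = n ∧ Subgroup.closure (S : Set G) = ⊤} := by
    obtain ⟨n, S, h1, h2⟩ := Group.fg_iff'.mp ‹_›
    exact ⟨n, S, h1, h2⟩
  obtain ⟨S, h1, h2⟩ := Nat.sInf_mem hne
  exact ⟨S, h1, h2⟩

theorem dGen_le_of_surjective {H : Type*} [Group H] [Group.FG G] (f : G →* H)
    (hf : Function.Surjective f) : dGen H ≤ dGen G := by
  classical
  obtain ⟨S, h1, h2⟩ := exists_dGen G
  have hcl : Subgroup.closure ((S.image f : Finset H) : Set H) = ⊤ := by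
    rw [Finset.coe_image, ← MonoidHom.map_closure, h2]
    exact Subgroup.map_top_of_surjective f hf
  exact (dGen_le hcl).trans (Finset.card_image_le.trans (le_of_eq h1))

theorem dGen_eq_of_equiv {H : Type*} [Group H] (e : G ≃* H) : dGen G = dGen H := by
  classical
  unfold dGen
  congr 1
  ext n
  constructor
  · rintro ⟨S, h1, h2⟩
    refine ⟨S.image e, by rw [Finset.card_image_of_injective _ e.injective, h1], ?_⟩
    rw [Finset.coe_image, show (⇑e '' ↑S) = ⇑e.toMonoidHom '' ↑S from rfl,
      ← MonoidHom.map_closure e.toMonoidHom, h2]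
    exact Subgroup.map_top_of_surjective _ e.surjective
  · rintro ⟨S, h1, h2⟩
    refine ⟨S.image e.symm, by rw [Finset.card_image_of_injective _ e.symm.injective, h1], ?_⟩
    rw [Finset.coe_image, show (⇑e.symm '' ↑S) = ⇑e.symm.toMonoidHom '' ↑S from rfl,
      ← MonoidHom.map_closure e.symm.toMonoidHom, h2]
    exact Subgroup.map_top_of_surjective _ e.symm.surjective

/-! ### pCommPow basics -/

theorem commutator_mem_pCommPow (a b : G) : ⁅a, b⁆ ∈ pCommPow p G :=
  Subgroup.subset_normalClosure (Or.inl ⟨a, b, rfl⟩)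

theorem pow_mem_pCommPow (g : G) : g ^ p ∈ pCommPow p G :=
  Subgroup.subset_normalClosure (Or.inr ⟨g, rfl⟩)

theorem pCommPow_le {N : Subgroup G} [N.Normal] (h1 : ∀ a b : G, ⁅a, b⁆ ∈ N)
    (h2 : ∀ g : G, g ^ p ∈ N) : pCommPow p G ≤ N := by
  apply Subgroup.normalClosure_le_normal
  rintro x (⟨a, b, rfl⟩ | ⟨g, rfl⟩)
  · exact h1 a b
  · exact h2 g

theorem map_pCommPow_le {H : Type*} [Group H] (f : G →* H) :
    (pCommPow p G).map f ≤ pCommPow p H := by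
  rw [Subgroup.map_le_iff_le_comap]
  refine pCommPow_le (fun a b => ?_) (fun g => ?_)
  · simp only [Subgroup.mem_comap, map_commutatorElement]
    exact commutator_mem_pCommPow _ _
  · simp only [Subgroup.mem_comap, map_pow]
    exact pow_mem_pCommPow _

theorem map_pCommPow_equiv {H : Type*} [Group H] (e : G ≃* H) :
    (pCommPow p G).map e.toMonoidHom = pCommPow p H := by
  refine le_antisymm (map_pCommPow_le _) ?_
  have h := map_pCommPow_le (p := p) e.symm.toMonoidHom
  calc pCommPow p H = ((pCommPow p H).map e.symm.toMonoidHom).map e.toMonoidHom := by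
        rw [Subgroup.map_map]
        simp
      _ ≤ (pCommPow p G).map e.toMonoidHom := Subgroup.map_mono h

theorem quotient_pCommPow_pow_eq_one (x : G ⧸ pCommPow p G) : x ^ p = 1 := by
  induction x using QuotientGroup.induction_on with
  | H g =>
    rw [← QuotientGroup.mk_pow, QuotientGroup.eq_one_iff]
    exact pow_mem_pCommPow g

theorem quotient_pCommPow_mul_comm (x y : G ⧸ pCommPow p G) : x * y = y * x := by
  induction x using QuotientGroup.induction_on with
  | H a =>
    induction y using QuotientGroup.induction_on with
    | H b =>
      rw [← QuotientGroup.mk_mul, ← QuotientGroup.mk_mul, QuotientGroup.eq]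
      have : (a * b)⁻¹ * (b * a) = ⁅b⁻¹, a⁻¹⁆ := by group
      rw [this]
      exact commutator_mem_pCommPow _ _

theorem finite_quotient_pCommPow (hp : p.Prime) (G : Type*) [Group G] [Group.FG G] :
    Finite (G ⧸ pCommPow p G) := by
  letI : CommGroup (G ⧸ pCommPow p G) :=
    { (inferInstance : Group (G ⧸ pCommPow p G)) with mul_comm := quotient_pCommPow_mul_comm }
  haveI : Group.FG (G ⧸ pCommPow p G) :=
    Group.fg_of_surjective (f := QuotientGroup.mk' (pCommPow p G)) (QuotientGroup.mk'_surjective _)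
  exact CommGroup.finite_of_fg_torsion _ fun x =>
    isOfFinOrder_iff_pow_eq_one.mpr ⟨p, hp.pos, quotient_pCommPow_pow_eq_one x⟩

theorem isPGroup_quotient_pCommPow (hp : p.Prime) (G : Type*) [Group G] :
    IsPGroup p (G ⧸ pCommPow p G) := fun g =>
  ⟨1, by rw [pow_one]; exact quotient_pCommPow_pow_eq_one g⟩

end Aux
section Aux2

open Subgroup

variable {p : ℕ} {G : Type*} [Group G]

theorem dp_le_of_surjective {H : Type*} [Group H] [Group.FG G] (f : G →* H)
    (hf : Function.Surjective f) : dp p H ≤ dp p G := by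
  haveI : Group.FG (G ⧸ pCommPow p G) :=
    Group.fg_of_surjective (f := QuotientGroup.mk' (pCommPow p G)) (QuotientGroup.mk'_surjective _)
  refine dGen_le_of_surjective
    (QuotientGroup.map (pCommPow p G) (pCommPow p H) f ?_) ?_
  · rw [← Subgroup.map_le_iff_le_comap]
    exact map_pCommPow_le f
  · intro x
    induction x using QuotientGroup.induction_on with
    | H h =>
      obtain ⟨g, rfl⟩ := hf h
      exact ⟨QuotientGroup.mk g, rfl⟩

theorem dp_eq_of_equiv {H : Type*} [Group H] (e : G ≃* H) : dp p G = dp p H :=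
  dGen_eq_of_equiv (QuotientGroup.congr (pCommPow p G) (pCommPow p H) e (map_pCommPow_equiv e))

/-- Burnside basis argument: in a finite `p`-group, a subgroup together with
`[P,P]P^p` generating the whole group must be the whole group. -/
theorem burnside_aux (hp : p.Prime) :
    ∀ (n : ℕ) (P : Type u) [Group P] [Finite P], Nat.card P = n → IsPGroup p P →
      ∀ H : Subgroup P, H ⊔ pCommPow p P = ⊤ → H = ⊤ := by
  intro n
  induction n using Nat.strong_induction_on with
  | _ n ih =>
    intro P _ _ hcard hP H hsup
    haveI : Fact p.Prime := ⟨hp⟩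
    rcases subsingleton_or_nontrivial P with hs | hnt
    · exact Subsingleton.elim H ⊤
    · -- find a central element of order p
      haveI := hP.center_nontrivial
      have hdvd : p ∣ Nat.card (Subgroup.center P) := by
        rcases (hP.to_subgroup (Subgroup.center P)).card_eq_or_dvd with h1 | h2
        · exact absurd (Nat.card_eq_one_iff_unique.mp h1).1 (not_subsingleton _)
        · exact h2
      obtain ⟨z, hz⟩ := exists_prime_orderOf_dvd_card' p hdvd
      set Z : Subgroup P := Subgroup.zpowers (z : P) with hZ
      have hzle : Z ≤ Subgroup.center P := Subgroup.zpowers_le.mpr z.2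
      haveI hZn : Z.Normal := by
        constructor
        intro x hx g
        have hc := (hzle hx)
        rw [Subgroup.mem_center_iff] at hc
        have hgx : g * x * g⁻¹ = x := by rw [hc g]; group
        rw [hgx]
        exact hx
      have hzcard : Nat.card Z = p := by
        have ho : orderOf (z : P) = orderOf z :=
          orderOf_injective (Subgroup.center P).subtype Subtype.coe_injective z
        rw [hZ, Nat.card_zpowers, ho, hz]
      have hltcard : Nat.card (P ⧸ Z) < n := by
        have := Subgroup.card_eq_card_quotient_mul_card_subgroup (α := P) Z
        rw [hcard, hzcard] at this
        have h1 : 0 < Nat.card (P ⧸ Z) := Nat.card_pos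
        nlinarith [hp.one_lt]
      -- apply induction to P / Z
      have hmap : (H.map (QuotientGroup.mk' Z)) ⊔ pCommPow p (P ⧸ Z) = ⊤ := by
        refine le_antisymm le_top ?_
        calc (⊤ : Subgroup (P ⧸ Z))
            = (H ⊔ pCommPow p P).map (QuotientGroup.mk' Z) := by
              rw [hsup, Subgroup.map_top_of_surjective _ (QuotientGroup.mk'_surjective _)]
          _ = H.map (QuotientGroup.mk' Z) ⊔ (pCommPow p P).map (QuotientGroup.mk' Z) := by
              rw [Subgroup.map_sup]
          _ ≤ H.map (QuotientGroup.mk' Z) ⊔ pCommPow p (P ⧸ Z) :=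
              sup_le_sup_left (map_pCommPow_le _) _
      have hHZ : H ⊔ Z = ⊤ := by
        have := ih _ hltcard (P ⧸ Z) rfl (hP.to_quotient Z) _ hmap
        have h2 := congrArg (Subgroup.comap (QuotientGroup.mk' Z)) this
        rwa [Subgroup.comap_map_eq, QuotientGroup.ker_mk', Subgroup.comap_top] at h2
      by_cases hzH : (z : P) ∈ H
      · have : Z ≤ H := Subgroup.zpowers_le.mpr hzH
        rw [← hHZ]
        exact le_antisymm le_sup_left (sup_le le_rfl this)
      · -- H is normal, quotient is cyclic generated by z of order p
        have hdecomp : ∀ g : P, ∃ h ∈ H, ∃ w ∈ Z, g = h * w := by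
          intro g
          have hg : g ∈ ((H ⊔ Z : Subgroup P) : Set P) := by rw [hHZ]; trivial
          rw [Subgroup.mul_normal H Z] at hg
          obtain ⟨h, hh, w, hw, rfl⟩ := hg
          exact ⟨h, hh, w, hw, rfl⟩
        haveI hHn : H.Normal := by
          constructor
          intro x hx g
          obtain ⟨h, hh, w, hw, rfl⟩ := hdecomp g
          have hcw := hzle hw
          rw [Subgroup.mem_center_iff] at hcw
          have h0 : h * w * x * (h * w)⁻¹ = h * (w * x * w⁻¹) * h⁻¹ := by group
          have hwx : w * x * w⁻¹ = x := by
            rw [show w * x = x * w from (hcw x).symm]; group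
          rw [h0, hwx]
          exact H.mul_mem (H.mul_mem hh hx) (H.inv_mem hh)
        -- the quotient P/H is generated by the image of z, abelian of exponent p
        have hzp : (z : P) ^ p = 1 := by
          have ho : orderOf (z : P) = orderOf z :=
            orderOf_injective (Subgroup.center P).subtype Subtype.coe_injective z
          rw [← hz, ← ho]
          exact pow_orderOf_eq_one _
        have hquot : ∀ x : P ⧸ H, ∃ k : ℤ, x = (QuotientGroup.mk (z : P)) ^ k := by
          intro x
          induction x using QuotientGroup.induction_on with
          | H g =>
            obtain ⟨h, hh, w, hw, rfl⟩ := hdecomp g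
            rw [Subgroup.mem_zpowers_iff] at hw
            obtain ⟨k, hk⟩ := hw
            refine ⟨k, ?_⟩
            have h5 : (QuotientGroup.mk (h * w) : P ⧸ H) = QuotientGroup.mk w := by
              rw [QuotientGroup.mk_mul, (QuotientGroup.eq_one_iff h).mpr hh, one_mul]
            rw [h5, ← hk, QuotientGroup.mk_zpow]
        have hple : pCommPow p P ≤ H := by
          refine pCommPow_le (fun a b => ?_) (fun g => ?_)
          · refine (QuotientGroup.eq_one_iff _).mp ?_
            obtain ⟨i, hi⟩ := hquot (QuotientGroup.mk a)
            obtain ⟨j, hj⟩ := hquot (QuotientGroup.mk b)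
            have h4 : (QuotientGroup.mk ⁅a, b⁆ : P ⧸ H) = ⁅(QuotientGroup.mk a : P ⧸ H),
                (QuotientGroup.mk b : P ⧸ H)⁆ := rfl
            rw [h4, hi, hj, commutatorElement_def]
            group
          · refine (QuotientGroup.eq_one_iff _).mp ?_
            obtain ⟨i, hi⟩ := hquot (QuotientGroup.mk g)
            have h4 : (QuotientGroup.mk (g ^ p) : P ⧸ H) = (QuotientGroup.mk g : P ⧸ H) ^ p := rfl
            rw [h4, hi, ← zpow_natCast, ← zpow_mul, mul_comm, zpow_mul, zpow_natCast,
              ← QuotientGroup.mk_pow, hzp]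
            simp
        rw [eq_top_iff, ← hsup]
        exact sup_le le_rfl hple

theorem dGen_eq_dp_of_pgroup (hp : p.Prime) (P : Type*) [Group P] [Finite P]
    (hP : IsPGroup p P) : dGen P = dp p P := by
  classical
  refine le_antisymm ?_ (dGen_le_of_surjective (QuotientGroup.mk' (pCommPow p P))
    (QuotientGroup.mk'_surjective _))
  obtain ⟨S, h1, h2⟩ := exists_dGen (P ⧸ pCommPow p P)
  set T : Finset P := S.image Quotient.out with hT
  have hsub : S ⊆ T.image (QuotientGroup.mk' (pCommPow p P)) := by
    intro x hx
    simp only [hT, Finset.image_image, Finset.mem_image]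
    refine ⟨x, hx, ?_⟩
    simp only [Function.comp_apply]
    exact Quotient.out_eq x
  have hsup : Subgroup.closure (T : Set P) ⊔ pCommPow p P = ⊤ := by
    have hmap : (Subgroup.closure (T : Set P)).map (QuotientGroup.mk' (pCommPow p P)) = ⊤ := by
      rw [MonoidHom.map_closure, eq_top_iff, ← h2]
      apply Subgroup.closure_mono
      intro x hx
      have := hsub hx
      simp only [Finset.mem_image] at this
      obtain ⟨y, hy, rfl⟩ := this
      exact Set.mem_image_of_mem _ hy
    have := congrArg (Subgroup.comap (QuotientGroup.mk' (pCommPow p P))) hmap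
    rwa [Subgroup.comap_map_eq, QuotientGroup.ker_mk', Subgroup.comap_top] at this
  have := burnside_aux hp (Nat.card P) P rfl hP _ hsup
  calc dGen P ≤ T.card := dGen_le this
    _ ≤ S.card := Finset.card_image_le
    _ = dp p P := h1

theorem exists_normal_index_p (hp : p.Prime) :
    ∀ (n : ℕ) (Q : Type u) [Group Q] [Finite Q], Nat.card Q = n → [Nontrivial Q] →
      IsPGroup p Q → ∃ M : Subgroup Q, M.Normal ∧ M.index = p := by
  intro n
  induction n using Nat.strong_induction_on with
  | _ n ih =>
    intro Q _ _ hcard _ hQ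
    haveI : Fact p.Prime := ⟨hp⟩
    haveI := hQ.center_nontrivial
    have hdvd : p ∣ Nat.card (Subgroup.center Q) := by
      rcases (hQ.to_subgroup (Subgroup.center Q)).card_eq_or_dvd with h1 | h2
      · exact absurd (Nat.card_eq_one_iff_unique.mp h1).1 (not_subsingleton _)
      · exact h2
    obtain ⟨z, hz⟩ := exists_prime_orderOf_dvd_card' p hdvd
    set Z : Subgroup Q := Subgroup.zpowers (z : Q) with hZ
    have hzle : Z ≤ Subgroup.center Q := Subgroup.zpowers_le.mpr z.2
    haveI hZn : Z.Normal := by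
      constructor
      intro x hx g
      have hc := (hzle hx)
      rw [Subgroup.mem_center_iff] at hc
      have hgx : g * x * g⁻¹ = x := by rw [hc g]; group
      rw [hgx]
      exact hx
    have hzcard : Nat.card Z = p := by
      have ho : orderOf (z : Q) = orderOf z :=
        orderOf_injective (Subgroup.center Q).subtype Subtype.coe_injective z
      rw [hZ, Nat.card_zpowers, ho, hz]
    rcases subsingleton_or_nontrivial (Q ⧸ Z) with hs | hnt
    · -- Q = Z has order p, so ⊥ works
      refine ⟨⊥, inferInstance, ?_⟩
      have hq1 : Nat.card (Q ⧸ Z) = 1 := Nat.card_eq_one_iff_unique.mpr ⟨hs, ⟨1⟩⟩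
      have h2 := Subgroup.card_eq_card_quotient_mul_card_subgroup (α := Q) Z
      rw [hq1, one_mul, hzcard] at h2
      rw [Subgroup.index_bot, h2]
    · have hltcard : Nat.card (Q ⧸ Z) < n := by
        have := Subgroup.card_eq_card_quotient_mul_card_subgroup (α := Q) Z
        rw [hcard, hzcard] at this
        have h1 : 0 < Nat.card (Q ⧸ Z) := Nat.card_pos
        nlinarith [hp.one_lt]
      obtain ⟨M, hMn, hMi⟩ := ih _ hltcard (Q ⧸ Z) rfl (hQ.to_quotient Z)
      refine ⟨M.comap (QuotientGroup.mk' Z), Subgroup.Normal.comap hMn _, ?_⟩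
      rw [Subgroup.index_comap_of_surjective _ (QuotientGroup.mk'_surjective _), hMi]

end Aux2
section Schreier

open Subgroup Subgroup.IsComplement
open scoped Pointwise

variable {p : ℕ} {G : Type*} [Group G]

theorem closure_erase_one {A : Type*} [Group A] [DecidableEq A] (T : Finset A) :
    Subgroup.closure ((T.erase 1 : Finset A) : Set A) = Subgroup.closure (T : Set A) := by
  refine le_antisymm (Subgroup.closure_mono ?_) ((Subgroup.closure_le _).mpr ?_)
  · intro a ha
    simp only [Finset.coe_erase, Set.mem_diff] at ha
    exact ha.1
  · intro a ha
    by_cases h1 : a = 1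
    · rw [h1]; exact Subgroup.one_mem _
    · refine Subgroup.subset_closure ?_
      simp only [Finset.coe_erase, Set.mem_diff, Set.mem_singleton_iff]
      exact ⟨ha, h1⟩

theorem schreier_index_p (hp : p.Prime) {H : Subgroup G} [H.Normal] (hidx : H.index = p)
    {S : Finset G} (hS : Subgroup.closure (S : Set G) = ⊤) :
    ∃ T : Finset H, T.card + p ≤ p * S.card + 1 ∧ Subgroup.closure (T : Set H) = ⊤ := by
  classical
  haveI : H.FiniteIndex := ⟨by rw [hidx]; exact hp.ne_zero⟩
  haveI := H.fintypeQuotientOfFiniteIndex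
  obtain ⟨x, hxS, hxH⟩ : ∃ x ∈ S, x ∉ H := by
    by_contra hcon
    push_neg at hcon
    have h1 : (⊤ : Subgroup G) ≤ H := by
      rw [← hS]; exact (Subgroup.closure_le H).mpr (fun s hs => hcon s hs)
    have h2 : H = ⊤ := le_antisymm le_top h1
    rw [h2, Subgroup.index_top] at hidx
    exact hp.one_lt.ne hidx
  have hcardQ : Nat.card (G ⧸ H) = p := by rw [← hidx]; rfl
  set xb : G ⧸ H := QuotientGroup.mk x with hxb
  have hxb1 : xb ≠ 1 := by simpa [hxb, QuotientGroup.eq_one_iff] using hxH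
  have horder : orderOf xb = p := by
    have hdvd : orderOf xb ∣ p := by rw [← hcardQ]; exact orderOf_dvd_natCard xb
    rcases (Nat.dvd_prime hp).mp hdvd with h1 | h1
    · exact absurd (orderOf_eq_one_iff.mp h1) hxb1
    · exact h1
  have hsur : ∀ q : G ⧸ H, ∃ i < p, xb ^ i = q := by
    intro q
    have htop : Subgroup.zpowers xb = ⊤ := by
      apply Subgroup.eq_top_of_card_eq
      rw [Nat.card_zpowers, horder, hcardQ]
    have hq : q ∈ Subgroup.zpowers xb := htop ▸ Subgroup.mem_top q
    rw [Subgroup.mem_zpowers_iff] at hq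
    obtain ⟨k, hk⟩ := hq
    have hp0 : (0 : ℤ) < (p : ℤ) := by exact_mod_cast hp.pos
    refine ⟨(k % (p : ℤ)).toNat, ?_, ?_⟩
    · have := Int.emod_lt_of_pos k hp0
      omega
    · have hnn : (0 : ℤ) ≤ k % (p : ℤ) := Int.emod_nonneg k (by positivity)
      have : xb ^ ((k % (p : ℤ)).toNat : ℤ) = xb ^ k := by
        rw [Int.toNat_of_nonneg hnn, ← horder, zpow_mod_orderOf]
      rw [← zpow_natCast, this, hk]
  have hinj : ∀ i j, i < p → j < p → xb ^ i = xb ^ j → i = j := by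
    intro i j hi hj hij
    have h2 := pow_eq_pow_iff_modEq.mp hij
    have h3 : i % p = j % p := by
      have := h2
      rwa [Nat.ModEq, horder] at this
    rw [Nat.mod_eq_of_lt hi, Nat.mod_eq_of_lt hj] at h3
    exact h3
  -- the transversal
  set R : Finset G := (Finset.range p).image (x ^ ·) with hRdef
  have hmemR : ∀ g : G, g ∈ R ↔ ∃ i < p, x ^ i = g := by
    intro g
    simp [hRdef, Finset.mem_image, Finset.mem_range]
  have hmk_pow : ∀ i : ℕ, (QuotientGroup.mk (x ^ i) : G ⧸ H) = xb ^ i := by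
    intro i
    rw [hxb]
    exact QuotientGroup.mk_pow H x i
  have hcoset : ∀ g r : G, g * r⁻¹ ∈ H ↔ (QuotientGroup.mk r : G ⧸ H) = QuotientGroup.mk g := by
    intro g r
    rw [QuotientGroup.eq]
    constructor
    · intro h
      have := ‹H.Normal›.conj_mem _ h r⁻¹
      simpa [mul_assoc] using this
    · intro h
      have := ‹H.Normal›.conj_mem _ h r
      simpa [mul_assoc] using this
  have hR : Subgroup.IsComplement (H : Set G) (R : Set G) := by
    rw [Subgroup.isComplement_iff_existsUnique_mul_inv_mem]
    intro g
    obtain ⟨i, hi, hieq⟩ := hsur (QuotientGroup.mk g)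
    have hxiR : x ^ i ∈ (R : Set G) := by
      simp only [Finset.mem_coe]
      exact (hmemR _).mpr ⟨i, hi, rfl⟩
    refine ⟨⟨x ^ i, hxiR⟩, ?_, ?_⟩
    · show g * (x ^ i)⁻¹ ∈ H
      rw [hcoset, hmk_pow, hieq]
    · rintro ⟨y, hy⟩ hgy
      simp only [Finset.mem_coe] at hy
      obtain ⟨j, hj, rfl⟩ := (hmemR y).mp hy
      have : (QuotientGroup.mk (x ^ j) : G ⧸ H) = QuotientGroup.mk g := (hcoset g _).mp hgy
      rw [hmk_pow] at this
      have hji : j = i := hinj j i hj hi (by rw [this, hieq])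
      exact Subtype.ext (congrArg (x ^ ·) hji)
  have hR1 : (1 : G) ∈ R := (hmemR 1).mpr ⟨0, hp.pos, pow_zero x⟩
  have hR1' : (1 : G) ∈ (R : Set G) := hR1
  have hfix : ∀ (g : G) (hg : g ∈ (R : Set G)), ((toRightFun hR g : G)) = g := by
    intro g hg
    have hu := Subgroup.isComplement_iff_existsUnique_mul_inv_mem.mp hR g
    have h1 : g * ((⟨g, hg⟩ : (R : Set G)) : G)⁻¹ ∈ H := by
      simp only [mul_inv_cancel]
      exact H.one_mem
    have := hu.unique (mul_inv_toRightFun_mem hR g) h1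
    rw [this]
  -- the Schreier generators
  set T₀ : Finset H := (R * S).image
    (fun g => (⟨g * ((toRightFun hR g : G))⁻¹, mul_inv_toRightFun_mem hR g⟩ : H)) with hT₀
  have hclosT₀ : Subgroup.closure (T₀ : Set H) = ⊤ := by
    rw [hT₀]
    exact Subgroup.closure_mul_image_eq_top' hR hR1 hS
  set T : Finset H := T₀.erase 1 with hT
  have hclosT : Subgroup.closure (T : Set H) = ⊤ := by
    rw [hT, closure_erase_one, hclosT₀]
  -- the bad products
  set B : Finset G := (Finset.range (p - 1)).image (fun i => x ^ (i + 1)) with hB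
  have hBsub : B ⊆ R * S := by
    intro b hb
    rw [hB, Finset.mem_image] at hb
    obtain ⟨i, hi, rfl⟩ := hb
    rw [Finset.mem_range] at hi
    have hxi : x ^ i ∈ R := (hmemR _).mpr ⟨i, by omega, rfl⟩
    have : x ^ i * x = x ^ (i + 1) := (pow_succ x i).symm
    rw [← this]
    exact Finset.mul_mem_mul hxi hxS
  have hBcard : B.card = p - 1 := by
    rw [hB, Finset.card_image_of_injOn, Finset.card_range]
    intro a ha b hb hab
    rw [Finset.mem_coe, Finset.mem_range] at ha hb
    have hab' : x ^ (a + 1) = x ^ (b + 1) := hab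
    have hq : xb ^ (a + 1) = xb ^ (b + 1) := by rw [← hmk_pow, ← hmk_pow, hab']
    have := hinj _ _ (by omega) (by omega) hq
    omega
  have hBtriv : ∀ b ∈ B, (⟨b * ((toRightFun hR b : G))⁻¹, mul_inv_toRightFun_mem hR b⟩ : H) = 1 := by
    intro b hb
    rw [hB, Finset.mem_image] at hb
    obtain ⟨i, hi, rfl⟩ := hb
    rw [Finset.mem_range] at hi
    have hmem : x ^ (i + 1) ∈ (R : Set G) := by
      simp only [Finset.mem_coe]
      exact (hmemR _).mpr ⟨i + 1, by omega, rfl⟩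
    have := hfix _ hmem
    ext
    simp only [this, mul_inv_cancel, Subgroup.coe_one]
  have hTsub : T ⊆ ((R * S) \ B).image
      (fun g => (⟨g * ((toRightFun hR g : G))⁻¹, mul_inv_toRightFun_mem hR g⟩ : H)) := by
    intro a ha
    rw [hT, Finset.mem_erase] at ha
    obtain ⟨hane, ha0⟩ := ha
    rw [hT₀, Finset.mem_image] at ha0
    obtain ⟨g, hg, rfl⟩ := ha0
    rw [Finset.mem_image]
    refine ⟨g, ?_, rfl⟩
    rw [Finset.mem_sdiff]
    refine ⟨hg, fun hgB => hane (hBtriv g hgB)⟩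
  have hcard : T.card + p ≤ p * S.card + 1 := by
    have h1 : T.card ≤ ((R * S) \ B).card := le_trans (Finset.card_le_card hTsub)
      Finset.card_image_le
    have h2 : ((R * S) \ B).card = (R * S).card - B.card := Finset.card_sdiff_of_subset hBsub
    have h3 : (R * S).card ≤ R.card * S.card := Finset.card_mul_le
    have h4 : R.card ≤ p := le_trans Finset.card_image_le (le_of_eq (Finset.card_range p))
    have h5 : 1 ≤ S.card := Finset.card_pos.mpr ⟨x, hxS⟩
    have h6 : R.card * S.card ≤ p * S.card := Nat.mul_le_mul_right _ h4
    have h7 : p * 1 ≤ p * S.card := Nat.mul_le_mul_left _ h5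
    have h8 : 2 ≤ p := hp.two_le
    omega
  exact ⟨T, hcard, hclosT⟩

end Schreier
section L1

open Subgroup

variable {p : ℕ}

theorem dGen_le_of_normal_index_p (hp : p.Prime) {G : Type*} [Group G] [Group.FG G]
    (H : Subgroup G) [H.Normal] (hidx : H.index = p) :
    dGen ↥H + p ≤ p * dGen G + 1 := by
  obtain ⟨S, h1, h2⟩ := exists_dGen G
  obtain ⟨T, hc, hcl⟩ := schreier_index_p hp hidx h2
  have := dGen_le hcl
  rw [h1] at hc
  omega

theorem index_map_equiv {G H : Type*} [Group G] [Group H] (e : G ≃* H) (K : Subgroup G) :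
    (K.map e.toMonoidHom).index = K.index :=
  K.index_map_eq e.surjective
    (by rw [(MonoidHom.ker_eq_bot_iff _).mpr e.injective]; exact bot_le)

theorem dp_map_equiv {G H : Type*} [Group G] [Group H] (e : G ≃* H) (K : Subgroup G) :
    dp p ↥(K.map e.toMonoidHom) = dp p ↥K :=
  (dp_eq_of_equiv (K.equivMapOfInjective e.toMonoidHom e.injective)).symm

theorem dp_le_of_normal_index_p (hp : p.Prime) {G : Type*} [Group G] [Group.FG G]
    (K : Subgroup G) [hKn : K.Normal] (hidx : K.index = p) :
    dp p ↥K + p ≤ p * dp p G + 1 := by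
  haveI : Fact p.Prime := ⟨hp⟩
  haveI : K.FiniteIndex := ⟨by rw [hidx]; exact hp.ne_zero⟩
  set N : Subgroup G := (pCommPow p ↥K).map K.subtype with hN
  have hNK : N ≤ K := Subgroup.map_subtype_le _
  haveI hNn : N.Normal := by
    constructor
    intro n hn g
    rw [hN, Subgroup.mem_map] at hn
    obtain ⟨m, hm, rfl⟩ := hn
    have hmem : (MulAut.conjNormal g m) ∈ pCommPow p ↥K := by
      have h0 := map_pCommPow_equiv (p := p) (MulAut.conjNormal g : MulAut ↥K)
      rw [← h0]
      exact Subgroup.mem_map_of_mem _ hm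
    refine Subgroup.mem_map.mpr ⟨_, hmem, ?_⟩
    simpa using (MulAut.conjNormal_apply g m).symm
  set π := QuotientGroup.mk' N with hπ
  set Kb : Subgroup (G ⧸ N) := K.map π with hKb
  set φ : ↥K →* G ⧸ N := π.comp K.subtype with hφ
  have hker : φ.ker = pCommPow p ↥K := by
    rw [hφ, ← MonoidHom.comap_ker, QuotientGroup.ker_mk', hN]
    exact Subgroup.comap_map_eq_self_of_injective K.subtype_injective _
  have hrange : φ.range = Kb := by
    rw [hφ, MonoidHom.range_comp, Subgroup.range_subtype, hKb]
  haveI : (φ.ker).Normal := inferInstance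
  have e1 : (↥K ⧸ pCommPow p ↥K) ≃* ↥Kb :=
    (QuotientGroup.quotientMulEquivOfEq hker.symm).trans
      ((QuotientGroup.quotientKerEquivRange φ).trans (MulEquiv.subgroupCongr hrange))
  have hdpK : dp p ↥K = dGen ↥Kb := dGen_eq_of_equiv e1
  haveI hKbn : Kb.Normal := Subgroup.Normal.map hKn π (QuotientGroup.mk'_surjective N)
  have hKbidx : Kb.index = p := by
    have hcmp : Subgroup.comap π Kb = K := by
      rw [hKb, Subgroup.comap_map_eq, QuotientGroup.ker_mk', sup_of_le_left hNK]
    rw [← hidx, ← hcmp, Subgroup.index_comap_of_surjective _ (QuotientGroup.mk'_surjective N)]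
  haveI : Kb.FiniteIndex := ⟨by rw [hKbidx]; exact hp.ne_zero⟩
  haveI hfinq : Finite (↥K ⧸ pCommPow p ↥K) := finite_quotient_pCommPow hp ↥K
  haveI hFinKb : Finite ↥Kb := Finite.of_equiv _ e1.toEquiv
  haveI : Fintype ((G ⧸ N) ⧸ Kb) := Kb.fintypeQuotientOfFiniteIndex
  haveI : Finite (G ⧸ N) := Finite.of_equiv _ (Subgroup.groupEquivQuotientProdSubgroup (s := Kb)).symm
  have hPKb : IsPGroup p ↥Kb := (isPGroup_quotient_pCommPow hp ↥K).of_surjective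
    e1.toMonoidHom e1.surjective
  have hPG : IsPGroup p (G ⧸ N) := by
    intro g
    have hgp : g ^ p ∈ Kb := by
      have hcard : Nat.card ((G ⧸ N) ⧸ Kb) = p := by rw [← hKbidx]; rfl
      have h1 : (QuotientGroup.mk (g ^ p) : ((G ⧸ N)) ⧸ Kb) = 1 := by
        rw [QuotientGroup.mk_pow, ← hcard]
        exact pow_card_eq_one'
      exact (QuotientGroup.eq_one_iff _).mp h1
    obtain ⟨k, hk⟩ := hPKb ⟨g ^ p, hgp⟩
    refine ⟨k + 1, ?_⟩
    have hk' : (g ^ p) ^ p ^ k = 1 := by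
      have := congrArg (Subgroup.subtype Kb) hk
      simpa using this
    rw [pow_succ', pow_mul]
    exact hk'
  haveI : Group.FG (G ⧸ N) := Group.fg_of_finite
  have hps := dGen_le_of_normal_index_p hp Kb hKbidx
  have hQ1 : dGen (G ⧸ N) = dp p (G ⧸ N) := dGen_eq_dp_of_pgroup hp _ hPG
  have hQ2 : dp p (G ⧸ N) ≤ dp p G := dp_le_of_surjective π (QuotientGroup.mk'_surjective N)
  have hmul : p * dp p (G ⧸ N) ≤ p * dp p G := Nat.mul_le_mul_left p hQ2
  rw [hQ1] at hps
  omega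

theorem dp_sub_one_le (hp : p.Prime) :
    ∀ (k : ℕ) (G : Type u) [Group G] [Group.FG G] (K : Subgroup G) [K.Normal],
      K.index = p ^ k → (dp p ↥K : ℤ) - 1 ≤ (p : ℤ) ^ k * ((dp p G : ℤ) - 1) := by
  intro k
  induction k with
  | zero =>
    intro G _ _ K _ hidx
    rw [pow_zero] at hidx
    have hK : K = ⊤ := Subgroup.index_eq_one.mp hidx
    subst hK
    rw [dp_eq_of_equiv (Subgroup.topEquiv (G := G)), pow_zero, one_mul]
  | succ k ih =>
    intro G _ _ K hKn hidx
    haveI : Fact p.Prime := ⟨hp⟩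
    haveI : K.FiniteIndex := ⟨by rw [hidx]; exact pow_ne_zero _ hp.ne_zero⟩
    haveI := K.fintypeQuotientOfFiniteIndex
    have hcardQ : Nat.card (G ⧸ K) = p ^ (k + 1) := by rw [← hidx]; rfl
    haveI : Nontrivial (G ⧸ K) := by
      rw [← Finite.one_lt_card_iff_nontrivial, hcardQ]
      exact Nat.one_lt_pow (Nat.succ_ne_zero k) hp.one_lt
    have hPQ : IsPGroup p (G ⧸ K) := IsPGroup.of_card hcardQ
    obtain ⟨Mb, hMbn, hMbidx⟩ := exists_normal_index_p hp (Nat.card (G ⧸ K)) (G ⧸ K) rfl hPQ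
    set L := Mb.comap (QuotientGroup.mk' K) with hL
    haveI hLn : L.Normal := Subgroup.Normal.comap hMbn _
    have hKL : K ≤ L := by
      intro g hg
      rw [hL, Subgroup.mem_comap]
      have h1 : QuotientGroup.mk' K g = 1 := (QuotientGroup.eq_one_iff g).mpr hg
      rw [h1]
      exact Mb.one_mem
    have hLidx : L.index = p := by
      rw [hL, Subgroup.index_comap_of_surjective _ (QuotientGroup.mk'_surjective K), hMbidx]
    haveI : L.FiniteIndex := ⟨by rw [hLidx]; exact hp.ne_zero⟩
    have hrel : K.relIndex L = p ^ k := by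
      have h1 := Subgroup.relIndex_mul_index hKL
      rw [hidx, hLidx, pow_succ] at h1
      exact Nat.eq_of_mul_eq_mul_right hp.pos h1
    haveI hKsubn : (K.subgroupOf L).Normal := Subgroup.Normal.subgroupOf hKn L
    have hKsub : (K.subgroupOf L).index = p ^ k := hrel
    have ihL := ih ↥L (K.subgroupOf L) hKsub
    have hiso : dp p ↥(K.subgroupOf L) = dp p ↥K :=
      dp_eq_of_equiv (Subgroup.subgroupOfEquivOfLe hKL)
    have hstep := dp_le_of_normal_index_p hp L hLidx
    have h2 : (dp p ↥L : ℤ) - 1 ≤ (p : ℤ) * ((dp p G : ℤ) - 1) := by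
      have hc : (dp p ↥L : ℤ) + p ≤ p * dp p G + 1 := by exact_mod_cast hstep
      linarith
    calc (dp p ↥K : ℤ) - 1 = (dp p ↥(K.subgroupOf L) : ℤ) - 1 := by rw [hiso]
      _ ≤ (p : ℤ) ^ k * ((dp p ↥L : ℤ) - 1) := ihL
      _ ≤ (p : ℤ) ^ k * ((p : ℤ) * ((dp p G : ℤ) - 1)) :=
          mul_le_mul_of_nonneg_left h2 (by positivity)
      _ = (p : ℤ) ^ (k + 1) * ((dp p G : ℤ) - 1) := by ring

end L1
section Grad

open Subgroup

variable {p : ℕ}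

/-- The defining set of the `p`-gradient. -/
def pGradSet (p : ℕ) (G : Type*) [Group G] : Set ℝ :=
  {r : ℝ | ∃ H : Subgroup G, H.Normal ∧ (∃ k : ℕ, H.index = p ^ k) ∧
    r = ((dp p H : ℝ) - 1) / (H.index : ℝ)}

theorem pGradient_eq_sInf_pGradSet (G : Type*) [Group G] : pGradient p G = sInf (pGradSet p G) := rfl

theorem pGradSet_nonempty (G : Type*) [Group G] : (pGradSet p G).Nonempty :=
  ⟨_, ⊤, inferInstance, ⟨0, by rw [Subgroup.index_top, pow_zero]⟩, rfl⟩

theorem pGradSet_bddBelow (hp : p.Prime) (G : Type*) [Group G] : BddBelow (pGradSet p G) := by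
  refine ⟨-1, fun r hr => ?_⟩
  obtain ⟨H, _, ⟨k, hk⟩, rfl⟩ := hr
  have h0 : H.index ≠ 0 := by rw [hk]; exact pow_ne_zero _ hp.ne_zero
  have h1 : (1 : ℝ) ≤ (H.index : ℝ) := by exact_mod_cast Nat.one_le_iff_ne_zero.mpr h0
  rw [le_div_iff₀ (by linarith : (0 : ℝ) < (H.index : ℝ))]
  have h2 : (0 : ℝ) ≤ (dp p ↥H : ℝ) := Nat.cast_nonneg _
  nlinarith

theorem mem_pGradSet {G : Type*} [Group G] (K : Subgroup G) (hn : K.Normal) (k : ℕ)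
    (hk : K.index = p ^ k) :
    ((dp p ↥K : ℝ) - 1) / (K.index : ℝ) ∈ pGradSet p G := ⟨K, hn, ⟨k, hk⟩, rfl⟩

theorem pGradSet_subset_of_equiv {A B : Type*} [Group A] [Group B] (e : A ≃* B) :
    pGradSet p A ⊆ pGradSet p B := by
  rintro r ⟨K, hn, ⟨k, hk⟩, rfl⟩
  refine ⟨K.map e.toMonoidHom, hn.map e.toMonoidHom e.surjective,
    ⟨k, by rw [_root_.index_map_equiv, hk]⟩, ?_⟩
  rw [_root_.index_map_equiv, dp_map_equiv]

theorem pGradient_eq_of_equiv {A B : Type*} [Group A] [Group B] (e : A ≃* B) :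
    pGradient p A = pGradient p B := by
  rw [pGradient_eq_sInf_pGradSet, pGradient_eq_sInf_pGradSet]
  congr 1
  exact Set.Subset.antisymm (pGradSet_subset_of_equiv e) (pGradSet_subset_of_equiv e.symm)

/-- Conjugation by an element of `H` fixes any normal subgroup of `H`. -/
theorem map_conj_self {A : Type*} [Group A] (K : Subgroup A) [hK : K.Normal] (h : A) :
    K.map (MulAut.conj h).toMonoidHom = K := by
  ext x
  simp only [Subgroup.mem_map]
  constructor
  · rintro ⟨y, hy, rfl⟩
    exact hK.conj_mem y hy h
  · intro hx
    refine ⟨h⁻¹ * x * h, ?_, ?_⟩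
    · have := hK.conj_mem x hx h⁻¹
      simpa using this
    · show MulAut.conj h (h⁻¹ * x * h) = x
      rw [MulAut.conj_apply]
      group

end Grad
section ConjInf

open Subgroup

variable {p : ℕ}

theorem map_mulaut_mul {A : Type*} [Group A] (K : Subgroup A) (e1 e2 : MulAut A) :
    K.map (e1 * e2).toMonoidHom = (K.map e2.toMonoidHom).map e1.toMonoidHom := by
  rw [Subgroup.map_map]
  rfl

theorem map_one_aut {A : Type*} [Group A] (K : Subgroup A) :
    K.map (1 : MulAut A).toMonoidHom = K := by
  ext x
  simp only [Subgroup.mem_map]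
  constructor
  · rintro ⟨y, hy, rfl⟩
    exact hy
  · intro hx
    exact ⟨x, hx, rfl⟩

theorem map_conjNormal_coset {G : Type*} [Group G] {H : Subgroup G} [H.Normal] (K : Subgroup ↥H)
    [hK : K.Normal] {a b : G} (hab : a⁻¹ * b ∈ H) :
    K.map (MulAut.conjNormal b).toMonoidHom = K.map (MulAut.conjNormal a).toMonoidHom := by
  have hb : b = a * (a⁻¹ * b) := by group
  rw [hb, map_mul, map_mulaut_mul]
  congr 1
  have h1 : MulAut.conjNormal (a⁻¹ * b) = MulAut.conj (⟨a⁻¹ * b, hab⟩ : ↥H) :=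
    MulAut.conjNormal_val (h := (⟨a⁻¹ * b, hab⟩ : ↥H))
  rw [h1]
  exact map_conj_self K _

theorem finset_inf_normal_index {A : Type*} [Group A] (hp : p.Prime) {ι : Type*} (s : Finset ι)
    (f : ι → Subgroup A) (hn : ∀ i ∈ s, (f i).Normal) (hi : ∀ i ∈ s, ∃ k, (f i).index = p ^ k) :
    (s.inf f).Normal ∧ ∃ k, (s.inf f).index = p ^ k := by
  classical
  induction s using Finset.cons_induction with
  | empty =>
    constructor
    · simpa using (inferInstance : (⊤ : Subgroup A).Normal)
    · exact ⟨0, by simp [Subgroup.index_top]⟩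
  | cons a s ha ih =>
    obtain ⟨hBn, k2, hk2⟩ := ih (fun i hi' => hn i (Finset.mem_cons_of_mem hi'))
      (fun i hi' => hi i (Finset.mem_cons_of_mem hi'))
    have hAn : (f a).Normal := hn a (Finset.mem_cons_self a s)
    obtain ⟨k1, hk1⟩ := hi a (Finset.mem_cons_self a s)
    rw [Finset.inf_cons]
    haveI := hBn
    haveI := hAn
    constructor
    · constructor
      intro x hx g
      exact ⟨hAn.conj_mem x hx.1 g, hBn.conj_mem x hx.2 g⟩
    · -- index of (f a ⊓ B)
      have h1 : (f a ⊓ s.inf f).relIndex (f a) * (f a).index = (f a ⊓ s.inf f).index :=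
        Subgroup.relIndex_mul_index inf_le_left
      have h2 : (f a ⊓ s.inf f).relIndex (f a) = (s.inf f).relIndex (f a) :=
        Subgroup.inf_relIndex_left (f a) (s.inf f)
      have h3 : (s.inf f).relIndex (f a) ∣ (s.inf f).index :=
        Subgroup.relIndex_dvd_index_of_normal (H := s.inf f) (K := f a)
      rw [hk2] at h3
      obtain ⟨c, _, hceq⟩ := (Nat.dvd_prime_pow hp).mp h3
      refine ⟨c + k1, ?_⟩
      rw [← h1, h2, hceq, hk1, pow_add]

end ConjInf
section T1p

open Subgroup

variable {p : ℕ}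

theorem pGradient_of_normal_index_p (hp : p.Prime) {G : Type u} [Group G] [Group.FG G]
    (H : Subgroup G) [hHn : H.Normal] (hidx : H.index = p) :
    pGradient p G = pGradient p ↥H / (p : ℝ) := by
  classical
  haveI : Fact p.Prime := ⟨hp⟩
  haveI : H.FiniteIndex := ⟨by rw [hidx]; exact hp.ne_zero⟩
  haveI := H.fintypeQuotientOfFiniteIndex
  have hppos : (0 : ℝ) < (p : ℝ) := by exact_mod_cast hp.pos
  -- Direction A
  have dirA : ∀ r ∈ pGradSet p ↥H, pGradient p G ≤ r / (p : ℝ) := by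
    rintro r ⟨K, hKn, ⟨m, hKidx⟩, rfl⟩
    haveI := hKn
    haveI : K.FiniteIndex := ⟨by rw [hKidx]; exact pow_ne_zero _ hp.ne_zero⟩
    set f : G ⧸ H → Subgroup ↥H :=
      fun q => K.map (MulAut.conjNormal (Quotient.out q)).toMonoidHom with hf
    have hfcoset : ∀ a : G, K.map (MulAut.conjNormal a).toMonoidHom = f (QuotientGroup.mk a) := by
      intro a
      have h0 : (QuotientGroup.mk (Quotient.out (QuotientGroup.mk a : G ⧸ H)) : G ⧸ H)
          = QuotientGroup.mk a := Quotient.out_eq _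
      exact map_conjNormal_coset K (QuotientGroup.eq.mp h0)
    have hfn : ∀ q, (f q).Normal :=
      fun q => hKn.map _ (MulEquiv.surjective _)
    have hfidx : ∀ q, (f q).index = p ^ m := fun q => by rw [hf]; rw [_root_.index_map_equiv]; exact hKidx
    set Kstar : Subgroup ↥H := Finset.univ.inf f with hKs
    obtain ⟨hKsn, j, hKsidx⟩ := finset_inf_normal_index hp Finset.univ f
      (fun i _ => hfn i) (fun i _ => ⟨m, hfidx i⟩)
    haveI := hKsn
    have hmem : ∀ x : ↥H, x ∈ Kstar ↔ ∀ q, x ∈ f q := by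
      intro x
      rw [hKs, Finset.inf_eq_iInf]
      simp [Subgroup.mem_iInf]
    have hKsK : Kstar ≤ K := by
      have h1 : f (QuotientGroup.mk 1) = K := by
        rw [← hfcoset 1, map_one MulAut.conjNormal, map_one_aut]
      intro x hx
      rw [← h1]
      exact (hmem x).mp hx _
    set K0 : Subgroup G := Kstar.map H.subtype with hK0
    haveI hK0n : K0.Normal := by
      constructor
      intro n hn g
      rw [hK0, Subgroup.mem_map] at hn
      obtain ⟨x, hx, rfl⟩ := hn
      have hx2 : MulAut.conjNormal g x ∈ Kstar := by
        rw [hmem]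
        intro q
        have hq' := (hmem x).mp hx (QuotientGroup.mk (g⁻¹ * Quotient.out q))
        rw [← hfcoset] at hq'
        have h2 : MulAut.conjNormal g x ∈
            K.map (MulAut.conjNormal (g * (g⁻¹ * Quotient.out q))).toMonoidHom := by
          rw [map_mul, map_mulaut_mul]
          exact Subgroup.mem_map_of_mem _ hq'
        have h3 : g * (g⁻¹ * Quotient.out q) = Quotient.out q := by group
        rw [h3] at h2
        exact h2
      refine Subgroup.mem_map.mpr ⟨_, hx2, ?_⟩
      simpa using (MulAut.conjNormal_apply g x).symm
    have hK0le : K0 ≤ H := Subgroup.map_subtype_le _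
    have hK0rel : K0.relIndex H = Kstar.index := by
      show (K0.subgroupOf H).index = Kstar.index
      rw [hK0]
      rw [show (Kstar.map H.subtype).subgroupOf H = Kstar from
        Subgroup.comap_map_eq_self_of_injective H.subtype_injective Kstar]
    have hK0idx : K0.index = p ^ (j + 1) := by
      have h1 := Subgroup.relIndex_mul_index hK0le
      rw [hK0rel, hKsidx, hidx] at h1
      rw [← h1, pow_succ]
    -- dp bound
    have h3 : Kstar.relIndex K ∣ Kstar.index :=
      Subgroup.relIndex_dvd_index_of_normal (H := Kstar) (K := K)
    rw [hKsidx] at h3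
    obtain ⟨c, _, hceq⟩ := (Nat.dvd_prime_pow hp).mp h3
    have hcmul : p ^ c * p ^ m = p ^ j := by
      have h4 := Subgroup.relIndex_mul_index hKsK
      rw [hceq, hKidx, hKsidx] at h4
      exact h4
    haveI hKsubn : (Kstar.subgroupOf K).Normal := Subgroup.Normal.subgroupOf hKsn K
    have hbound := dp_sub_one_le hp c ↥K (Kstar.subgroupOf K) hceq
    have hdpiso : dp p ↥(Kstar.subgroupOf K) = dp p ↥Kstar :=
      dp_eq_of_equiv (Subgroup.subgroupOfEquivOfLe hKsK)
    have hdpK0 : dp p ↥Kstar = dp p ↥K0 :=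
      dp_eq_of_equiv (Kstar.equivMapOfInjective H.subtype H.subtype_injective)
    have hle : pGradient p G ≤ ((dp p ↥K0 : ℝ) - 1) / (K0.index : ℝ) :=
      csInf_le (pGradSet_bddBelow hp G) (mem_pGradSet K0 hK0n _ hK0idx)
    refine hle.trans ?_
    have hbR : (dp p ↥K0 : ℝ) - 1 ≤ (p : ℝ) ^ c * ((dp p ↥K : ℝ) - 1) := by
      rw [hdpiso, hdpK0] at hbound
      exact_mod_cast hbound
    rw [hK0idx, hKidx]
    push_cast
    have hjeq : ((p : ℝ)) ^ (j + 1) = (p : ℝ) ^ c * ((p : ℝ) ^ m * (p : ℝ)) := by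
      have : ((p : ℝ)) ^ c * (p : ℝ) ^ m = (p : ℝ) ^ j := by exact_mod_cast hcmul
      rw [pow_succ, ← this]
      ring
    calc ((dp p ↥K0 : ℝ) - 1) / ((p : ℝ) ^ (j + 1))
        = ((dp p ↥K0 : ℝ) - 1) / ((p : ℝ) ^ c * ((p : ℝ) ^ m * (p : ℝ))) := by rw [hjeq]
      _ ≤ ((p : ℝ) ^ c * ((dp p ↥K : ℝ) - 1)) / ((p : ℝ) ^ c * ((p : ℝ) ^ m * (p : ℝ))) := by
          gcongr
      _ = ((dp p ↥K : ℝ) - 1) / ((p : ℝ) ^ m * (p : ℝ)) := by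
          rw [mul_div_mul_left]
          positivity
      _ = ((dp p ↥K : ℝ) - 1) / ((p : ℝ) ^ m) / (p : ℝ) := by
          rw [div_div]
  -- Direction B
  have dirB : ∀ r ∈ pGradSet p G, pGradient p ↥H / (p : ℝ) ≤ r := by
    rintro r ⟨L, hLn, ⟨k, hLidx⟩, rfl⟩
    haveI := hLn
    haveI : L.FiniteIndex := ⟨by rw [hLidx]; exact pow_ne_zero _ hp.ne_zero⟩
    set M : Subgroup ↥H := L.subgroupOf H with hM
    haveI hMn : M.Normal := Subgroup.Normal.subgroupOf hLn H
    have hMidx_dvd : M.index ∣ p ^ k := by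
      rw [← hLidx]
      exact Subgroup.relIndex_dvd_index_of_normal (H := L) (K := H)
    obtain ⟨a, _, haidx⟩ := (Nat.dvd_prime_pow hp).mp hMidx_dvd
    haveI hHsubn : (H.subgroupOf L).Normal := Subgroup.Normal.subgroupOf hHn L
    have hHsub_dvd : (H.subgroupOf L).index ∣ p ^ 1 := by
      rw [pow_one, ← hidx]
      exact Subgroup.relIndex_dvd_index_of_normal (H := H) (K := L)
    obtain ⟨b, _, hbidx⟩ := (Nat.dvd_prime_pow hp).mp hHsub_dvd
    have hbound := dp_sub_one_le hp b ↥L (H.subgroupOf L) hbidx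
    have hinf1 : (H ⊓ L).subgroupOf L = H.subgroupOf L := Subgroup.inf_subgroupOf_right H L
    have hinf2 : (L ⊓ H).subgroupOf H = L.subgroupOf H := Subgroup.inf_subgroupOf_right L H
    have hcomm : H ⊓ L = L ⊓ H := inf_comm H L
    have hiso : dp p ↥(H.subgroupOf L) = dp p ↥M := by
      rw [hM, ← hinf1, ← hinf2,
        dp_eq_of_equiv (Subgroup.subgroupOfEquivOfLe (inf_le_right : H ⊓ L ≤ L)),
        dp_eq_of_equiv (Subgroup.subgroupOfEquivOfLe (inf_le_right : L ⊓ H ≤ H)), hcomm]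
    have harith : p * M.index = (H.subgroupOf L).index * L.index := by
      have h1 : (L ⊓ H).relIndex H * H.index = (L ⊓ H).index :=
        Subgroup.relIndex_mul_index inf_le_right
      have h2 : (H ⊓ L).relIndex L * L.index = (H ⊓ L).index :=
        Subgroup.relIndex_mul_index inf_le_right
      have h3 : (L ⊓ H).relIndex H = M.index := by
        show ((L ⊓ H).subgroupOf H).index = M.index
        rw [hinf2, hM]
      have h4 : (H ⊓ L).relIndex L = (H.subgroupOf L).index := by
        show ((H ⊓ L).subgroupOf L).index = (H.subgroupOf L).index
        rw [hinf1]
      have h5 : (H ⊓ L).index = (L ⊓ H).index := by rw [hcomm]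
      calc p * M.index = M.index * p := mul_comm _ _
        _ = (L ⊓ H).relIndex H * H.index := by rw [h3, hidx]
        _ = (L ⊓ H).index := h1
        _ = (H ⊓ L).index := h5.symm
        _ = (H ⊓ L).relIndex L * L.index := h2.symm
        _ = (H.subgroupOf L).index * L.index := by rw [h4]
    have hle : pGradient p ↥H ≤ ((dp p ↥M : ℝ) - 1) / (M.index : ℝ) :=
      csInf_le (pGradSet_bddBelow hp ↥H) (mem_pGradSet M hMn _ haidx)
    have hstep1 : pGradient p ↥H / (p : ℝ) ≤ (((dp p ↥M : ℝ) - 1) / (M.index : ℝ)) / (p : ℝ) := by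
      gcongr
    refine hstep1.trans ?_
    -- arithmetic
    have hbR : (dp p ↥M : ℝ) - 1 ≤ (p : ℝ) ^ b * ((dp p ↥L : ℝ) - 1) := by
      rw [hiso] at hbound
      exact_mod_cast hbound
    have hdenom : (M.index : ℝ) * (p : ℝ) = (p : ℝ) ^ b * (L.index : ℝ) := by
      have : (p : ℝ) * (M.index : ℝ) = ((H.subgroupOf L).index : ℝ) * (L.index : ℝ) := by
        exact_mod_cast harith
      rw [hbidx] at this
      push_cast at this ⊢
      linarith
    have hMpos : (0 : ℝ) < (M.index : ℝ) := by
      have : M.index ≠ 0 := by rw [haidx]; exact pow_ne_zero _ hp.ne_zero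
      exact_mod_cast Nat.pos_of_ne_zero this
    have hLpos : (0 : ℝ) < (L.index : ℝ) := by
      have : L.index ≠ 0 := by rw [hLidx]; exact pow_ne_zero _ hp.ne_zero
      exact_mod_cast Nat.pos_of_ne_zero this
    calc (((dp p ↥M : ℝ) - 1) / (M.index : ℝ)) / (p : ℝ)
        = ((dp p ↥M : ℝ) - 1) / ((M.index : ℝ) * (p : ℝ)) := by rw [div_div]
      _ = ((dp p ↥M : ℝ) - 1) / ((p : ℝ) ^ b * (L.index : ℝ)) := by rw [hdenom]
      _ ≤ ((p : ℝ) ^ b * ((dp p ↥L : ℝ) - 1)) / ((p : ℝ) ^ b * (L.index : ℝ)) := by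
          gcongr
      _ = ((dp p ↥L : ℝ) - 1) / (L.index : ℝ) := by
          rw [mul_div_mul_left]
          positivity
  -- combine
  have hA : pGradient p G ≤ pGradient p ↥H / (p : ℝ) := by
    rw [le_div_iff₀ hppos]
    rw [pGradient_eq_sInf_pGradSet ↥H]
    refine le_csInf (pGradSet_nonempty ↥H) (fun r hr => ?_)
    have := dirA r hr
    rw [le_div_iff₀ hppos] at this
    exact this
  have hB : pGradient p ↥H / (p : ℝ) ≤ pGradient p G := by
    rw [pGradient_eq_sInf_pGradSet G]
    exact le_csInf (pGradSet_nonempty G) dirB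
  linarith

end T1p
section Final

open Subgroup

variable {p : ℕ}

theorem pGradient_of_normal (hp : p.Prime) :
    ∀ (k : ℕ) (G : Type u) [Group G] [Group.FG G] (H : Subgroup G) [H.Normal],
      H.index = p ^ k → pGradient p G = pGradient p ↥H / (H.index : ℝ) := by
  intro k
  induction k with
  | zero =>
    intro G _ _ H _ hidx
    rw [pow_zero] at hidx
    have hH : H = ⊤ := Subgroup.index_eq_one.mp hidx
    subst hH
    rw [hidx, Nat.cast_one, div_one]
    exact (pGradient_eq_of_equiv Subgroup.topEquiv).symm
  | succ k ih =>
    intro G _ _ H hHn hidx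
    haveI : Fact p.Prime := ⟨hp⟩
    haveI : H.FiniteIndex := ⟨by rw [hidx]; exact pow_ne_zero _ hp.ne_zero⟩
    haveI := H.fintypeQuotientOfFiniteIndex
    have hcardQ : Nat.card (G ⧸ H) = p ^ (k + 1) := by rw [← hidx]; rfl
    haveI : Nontrivial (G ⧸ H) := by
      rw [← Finite.one_lt_card_iff_nontrivial, hcardQ]
      exact Nat.one_lt_pow (Nat.succ_ne_zero k) hp.one_lt
    have hPQ : IsPGroup p (G ⧸ H) := IsPGroup.of_card hcardQ
    obtain ⟨Mb, hMbn, hMbidx⟩ := exists_normal_index_p hp (Nat.card (G ⧸ H)) (G ⧸ H) rfl hPQ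
    set L := Mb.comap (QuotientGroup.mk' H) with hL
    haveI hLn : L.Normal := Subgroup.Normal.comap hMbn _
    have hHL : H ≤ L := by
      intro g hg
      rw [hL, Subgroup.mem_comap]
      have h1 : QuotientGroup.mk' H g = 1 := (QuotientGroup.eq_one_iff g).mpr hg
      rw [h1]
      exact Mb.one_mem
    have hLidx : L.index = p := by
      rw [hL, Subgroup.index_comap_of_surjective _ (QuotientGroup.mk'_surjective H), hMbidx]
    haveI : L.FiniteIndex := ⟨by rw [hLidx]; exact hp.ne_zero⟩
    have hrel : (H.subgroupOf L).index = p ^ k := by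
      have h1 := Subgroup.relIndex_mul_index hHL
      rw [hidx, hLidx, pow_succ] at h1
      exact Nat.eq_of_mul_eq_mul_right hp.pos h1
    haveI hHsubn : (H.subgroupOf L).Normal := Subgroup.Normal.subgroupOf hHn L
    have h1 : pGradient p G = pGradient p ↥L / (p : ℝ) := pGradient_of_normal_index_p hp L hLidx
    have h2 := ih ↥L (H.subgroupOf L) hrel
    have h3 : pGradient p ↥(H.subgroupOf L) = pGradient p ↥H :=
      pGradient_eq_of_equiv (Subgroup.subgroupOfEquivOfLe hHL)
    rw [h1, h2, h3, hrel, hidx]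
    rw [div_div]
    push_cast
    ring_nf
  
theorem normal_of_subgroupOf_top {G : Type*} [Group G] {K : Subgroup G}
    (h : (K.subgroupOf ⊤).Normal) : K.Normal := by
  constructor
  intro n hn g
  have h2 := h.conj_mem ⟨n, Subgroup.mem_top n⟩
    (by rwa [Subgroup.mem_subgroupOf]) ⟨g, Subgroup.mem_top g⟩
  rw [Subgroup.mem_subgroupOf] at h2
  simpa using h2

theorem subgroupOf_subgroupOf_normal {G : Type*} [Group G] {A B K : Subgroup G}
    (hBK : B ≤ K) (h : (A.subgroupOf B).Normal) :
    ((A.subgroupOf K).subgroupOf (B.subgroupOf K)).Normal := by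
  constructor
  intro n hn g
  have hnB : ((n : ↥K) : G) ∈ B := (Subgroup.mem_subgroupOf).mp n.2
  have hgB : ((g : ↥K) : G) ∈ B := (Subgroup.mem_subgroupOf).mp g.2
  have hnA : ((n : ↥K) : G) ∈ A := by
    rw [Subgroup.mem_subgroupOf, Subgroup.mem_subgroupOf] at hn
    exact hn
  have hc := h.conj_mem ⟨_, hnB⟩ (by rwa [Subgroup.mem_subgroupOf]) ⟨_, hgB⟩
  rw [Subgroup.mem_subgroupOf] at hc
  rw [Subgroup.mem_subgroupOf, Subgroup.mem_subgroupOf]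
  simpa using hc

theorem chain_le {G : Type*} [Group G] (c : ℕ → Subgroup G) :
    ∀ (n : ℕ), (∀ i < n, c i ≤ c (i + 1)) → ∀ i ≤ n, c i ≤ c n := by
  intro n
  induction n with
  | zero =>
    intro _ i hi
    have : i = 0 := Nat.le_zero.mp hi
    rw [this]
  | succ n ihn =>
    intro hc i hi
    rcases Nat.lt_succ_iff_lt_or_eq.mp (Nat.lt_succ_of_le hi) with h | h
    · exact le_trans (ihn (fun j hj => hc j (by omega)) i (by omega)) (hc n (by omega))
    · rw [h]

theorem main_aux (hp : p.Prime) :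
    ∀ (n : ℕ) (G : Type u) [Group G] [Group.FG G] (H : Subgroup G) (c : ℕ → Subgroup G),
      c 0 = H → c n = ⊤ → (∀ i < n, c i ≤ c (i + 1) ∧ ((c i).subgroupOf (c (i + 1))).Normal) →
      (∃ k, H.index = p ^ k) → pGradient p G = pGradient p ↥H / (H.index : ℝ) := by
  intro n
  induction n with
  | zero =>
    intro G _ _ H c h0 hn _ _
    have hH : H = ⊤ := by rw [← h0, hn]
    subst hH
    rw [Subgroup.index_top, Nat.cast_one, div_one]
    exact (pGradient_eq_of_equiv Subgroup.topEquiv).symm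
  | succ n ih =>
    intro G _ _ H c h0 hn hc hidx
    obtain ⟨k, hk⟩ := hidx
    set K := c n with hK
    have hKn : K.Normal := by
      have h2 := (hc n (Nat.lt_succ_self n)).2
      rw [hn] at h2
      exact normal_of_subgroupOf_top h2
    haveI := hKn
    have hHK : H ≤ K := by
      rw [← h0, hK]
      exact chain_le c n (fun i hi => (hc i (by omega)).1) 0 (Nat.zero_le n)
    have hKdvd : K.index ∣ p ^ k := by rw [← hk]; exact Subgroup.index_dvd_of_le hHK
    obtain ⟨a, _, haidx⟩ := (Nat.dvd_prime_pow hp).mp hKdvd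
    haveI : K.FiniteIndex := ⟨by rw [haidx]; exact pow_ne_zero _ hp.ne_zero⟩
    have hreldvd : H.relIndex K ∣ p ^ k :=
      ⟨K.index, by rw [← hk, ← Subgroup.relIndex_mul_index hHK]⟩
    obtain ⟨b, _, hbidx⟩ := (Nat.dvd_prime_pow hp).mp hreldvd
    have h1 : pGradient p G = pGradient p ↥K / (K.index : ℝ) :=
      pGradient_of_normal hp a G K haidx
    set c' : ℕ → Subgroup ↥K := fun i => (c i).subgroupOf K with hc'
    have hc'0 : c' 0 = H.subgroupOf K := by rw [hc']; simp only []; rw [h0]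
    have hc'n : c' n = ⊤ := by
      rw [hc']
      simp only []
      rw [← hK]
      exact Subgroup.subgroupOf_self K
    have hc'cond : ∀ i < n, c' i ≤ c' (i + 1) ∧ ((c' i).subgroupOf (c' (i + 1))).Normal := by
      intro i hi
      have hle : c i ≤ c (i + 1) := (hc i (by omega)).1
      have hnor := (hc i (by omega)).2
      have hci1K : c (i + 1) ≤ K := by
        rw [hK]
        exact chain_le c n (fun j hj => (hc j (by omega)).1) (i + 1) (by omega)
      constructor
      · intro x hx
        rw [hc'] at hx ⊢
        simp only [] at hx ⊢
        rw [Subgroup.mem_subgroupOf] at hx ⊢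
        exact hle hx
      · exact subgroupOf_subgroupOf_normal hci1K hnor
    have h2 := ih ↥K (H.subgroupOf K) c' hc'0 hc'n hc'cond ⟨b, hbidx⟩
    have h3 : pGradient p ↥(H.subgroupOf K) = pGradient p ↥H :=
      pGradient_eq_of_equiv (Subgroup.subgroupOfEquivOfLe hHK)
    rw [h1, h2, h3]
    have hHidx_eq : (H.index : ℝ) = ((H.subgroupOf K).index : ℝ) * (K.index : ℝ) := by
      exact_mod_cast (Subgroup.relIndex_mul_index hHK).symm
    rw [div_div, ← hHidx_eq]

end Final

/-- if `H` is a subnormal subgroup of `p`-power index in a finitely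
generated group `G`, then `RG_p(G) = RG_p(H)/[G : H]`. -/
theorem pGradient_of_subnormal (p : ℕ) (hp : p.Prime) (G : Type*) [Group G] [Group.FG G]
    (H : Subgroup G) (hsub : IsSubnormal H) (hidx : ∃ k : ℕ, H.index = p ^ k) :
    pGradient p G = pGradient p H / (H.index : ℝ) := by
  obtain ⟨n, c, h0, hn, hc⟩ := hsub
  exact main_aux hp n G H c h0 hn hc hidx
end
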